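/- arXiv:2512.24935 — 7 statements merged into one kernel-verified Lean document; each statement's English description precedes it below -/
import Mathlib

section
/- The operator D is self-adjoint with respect to the pairing ⟨f,g⟩ = ∫_E f g dμ×: for all locally constant functions f, g : E → ℝ, the integrals defining (Df)(x) and (Dg)(x) converge absolutely for every x ∈ E, and ∫_E (Df)(x) g(x) dμ×(x) = ∫_E f(x) (Dg)(x) dμ×(x), both integrals being finite. -/
open MeasureTheory Metric Set
open scoped NNReal ENNReal

noncomputable section

/-- The fundamental domain `E = ⋃_{s=0}^{m-1} p^s ℤ_p^×` of the Tate curve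
`ℚ_p^×/p^{mℤ}`, described as the set of `x` with `p^{-(m-1)} ≤ |x| ≤ 1`
(such an `x` is automatically nonzero). -/
def Efund (p m : ℕ) [Fact p.Prime] : Set ℚ_[p] :=
  {x | (p : ℝ) ^ (1 - (m : ℤ)) ≤ ‖x‖ ∧ ‖x‖ ≤ 1}

/-- The operator `(Dφ)(x) = |x| ∫_E (φ(z) − φ(x))/|z − x|² dμ⁺(z)`. -/
def Dop (p m : ℕ) [Fact p.Prime] [MeasurableSpace ℚ_[p]]
    (μ : Measure ℚ_[p]) (φ : ℚ_[p] → ℝ) (x : ℚ_[p]) : ℝ :=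
  ‖x‖ * ∫ z in Efund p m, (φ z - φ x) / ‖z - x‖ ^ 2 ∂μ

/-- The multiplicative measure `dμ× = dμ⁺/|x|`. -/
def mulMeasure (p : ℕ) [Fact p.Prime] [MeasurableSpace ℚ_[p]]
    (μ : Measure ℚ_[p]) : Measure ℚ_[p] :=
  μ.withDensity fun x => ENNReal.ofReal (1 / ‖x‖)

/-- `f` is locally constant on `E`: every point of `E` has a neighborhood in `E`
on which `f` is constant. -/
def LocConstOn (p m : ℕ) [Fact p.Prime] (f : ℚ_[p] → ℝ) : Prop :=
  ∀ x ∈ Efund p m, ∃ n : ℕ,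
    ∀ y ∈ Efund p m, ‖y - x‖ ≤ (p : ℝ) ^ (-(n : ℤ)) → f y = f x

namespace DopAux

variable {p m : ℕ} [Fact p.Prime]

lemma hp_pos : 0 < (p:ℝ) := by exact_mod_cast (Fact.out : p.Prime).pos
lemma hp_one : 1 < (p:ℝ) := by exact_mod_cast (Fact.out : p.Prime).one_lt

lemma isClosed_Efund : IsClosed (Efund p m) := by
  have : Efund p m = (fun x : ℚ_[p] => ‖x‖) ⁻¹' (Set.Icc ((p:ℝ) ^ (1 - (m:ℤ))) 1) := rfl
  rw [this]; exact isClosed_Icc.preimage continuous_norm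

lemma isCompact_Efund : IsCompact (Efund p m) :=
  ((isCompact_closedBall (0:ℚ_[p]) 1).of_isClosed_subset isClosed_Efund
    (fun x hx => by simpa [mem_closedBall_zero_iff] using hx.2))

lemma norm_pos_of_mem {x : ℚ_[p]} (hx : x ∈ Efund p m) : 0 < ‖x‖ :=
  lt_of_lt_of_le (zpow_pos hp_pos _) hx.1

/-- Uniform local constancy on the compact set `E`. -/
lemma uniform {f : ℚ_[p] → ℝ} (hf : LocConstOn p m f) :
    ∃ n : ℕ, ∀ x ∈ Efund p m, ∀ y ∈ Efund p m,
      ‖y - x‖ ≤ (p : ℝ) ^ (-(n : ℤ)) → f y = f x := by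
  classical
  choose N hN using hf
  set c : Efund p m → Set ℚ_[p] := fun i => ball (i : ℚ_[p]) ((p:ℝ) ^ (-(N i i.2 : ℤ))) with hc
  obtain ⟨δ, hδ, hball⟩ := lebesgue_number_lemma_of_metric isCompact_Efund
    (c := c) (fun i => isOpen_ball)
    (fun x hx => Set.mem_iUnion.2 ⟨⟨x, hx⟩, mem_ball_self (zpow_pos hp_pos _)⟩)
  obtain ⟨n, hn⟩ : ∃ n : ℕ, (p:ℝ) ^ (-(n:ℤ)) < δ := by
    obtain ⟨n, hn⟩ := pow_unbounded_of_one_lt (δ⁻¹) (hp_one (p := p))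
    refine ⟨n, ?_⟩
    have hpn : (0:ℝ) < (p:ℝ)^n := pow_pos hp_pos n
    rw [zpow_neg, zpow_natCast]
    exact (inv_lt_comm₀ hpn hδ).mpr hn
  refine ⟨n, fun x hx y hy hxy => ?_⟩
  obtain ⟨i, hi⟩ := hball x hx
  have hxi : x ∈ ball (i : ℚ_[p]) ((p:ℝ) ^ (-(N i i.2 : ℤ))) := hi (mem_ball_self hδ)
  have hyi : y ∈ ball (i : ℚ_[p]) ((p:ℝ) ^ (-(N i i.2 : ℤ))) := by
    apply hi
    rw [mem_ball, dist_eq_norm]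
    exact lt_of_le_of_lt hxy hn
  rw [mem_ball, dist_eq_norm] at hxi hyi
  rw [hN i i.2 y hy hyi.le, hN i i.2 x hx hxi.le]

lemma continuousOn_of_locConst {f : ℚ_[p] → ℝ} (hf : LocConstOn p m f) :
    ContinuousOn f (Efund p m) := by
  intro x hx
  obtain ⟨n, hn⟩ := hf x hx
  have hev : ∀ᶠ y in nhdsWithin x (Efund p m), f y = f x := by
    filter_upwards [inter_mem_nhdsWithin (Efund p m)
      (closedBall_mem_nhds x (zpow_pos (hp_pos (p := p)) (-(n:ℤ))))] with y hy
    exact hn y hy.1 (by simpa [mem_closedBall, dist_eq_norm] using hy.2)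
  exact (continuousWithinAt_const (b := f x)).congr_of_eventuallyEq hev (rfl)

lemma exists_bound {f : ℚ_[p] → ℝ} (hf : LocConstOn p m f) :
    ∃ M : ℝ, 0 ≤ M ∧ ∀ x ∈ Efund p m, |f x| ≤ M := by
  obtain ⟨C, hC⟩ := isCompact_Efund.exists_bound_of_continuousOn (continuousOn_of_locConst hf)
  exact ⟨max C 0, le_max_right _ _, fun x hx =>
    le_trans (by simpa [Real.norm_eq_abs] using hC x hx) (le_max_left _ _)⟩

end DopAux

namespace DopAux
variable {p m : ℕ} [Fact p.Prime]

lemma abs_div_le {a d r M : ℝ} (hr : 0 < r) (hM : 0 ≤ M) (hd : 0 ≤ d)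
    (h0 : d ≤ r → a = 0) (ha : |a| ≤ M) : |a / d ^ 2| ≤ M / r ^ 2 := by
  rcases le_or_gt d r with h | h
  · rw [h0 h]; simpa using by positivity
  · rw [abs_div, abs_pow, abs_of_nonneg hd]
    exact div_le_div₀ hM ha (by positivity) (pow_le_pow_left₀ hr.le h.le 2)

lemma Efund_subset : Efund p m ⊆ closedBall (0:ℚ_[p]) 1 := fun x hx => by
  simpa [mem_closedBall_zero_iff] using hx.2

lemma norm_sub_max {x x' z : ℚ_[p]} : ‖z - x'‖ ≤ max ‖z - x‖ ‖x' - x‖ := by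
  have h : z - x' = (z - x) + (x - x') := by ring
  calc ‖z - x'‖ = ‖(z - x) + (x - x')‖ := by rw [h]
    _ ≤ max ‖z - x‖ ‖x - x'‖ := Padic.nonarchimedean _ _
    _ = max ‖z - x‖ ‖x' - x‖ := by rw [norm_sub_rev x x']

lemma norm_sub_eq_of_lt {x x' z : ℚ_[p]} (h : ‖x' - x‖ < ‖z - x‖) : ‖z - x'‖ = ‖z - x‖ := by
  have h1 : z - x' = (z - x) + (x - x') := by ring
  have h2 : ‖x - x'‖ = ‖x' - x‖ := norm_sub_rev _ _
  rw [h1, Padic.add_eq_max_of_ne (by rw [h2]; exact ne_of_gt h), h2,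
    max_eq_left h.le]

variable [MeasurableSpace ℚ_[p]] [BorelSpace ℚ_[p]] {μ : Measure ℚ_[p]}

lemma measurableSet_Efund : MeasurableSet (Efund p m) := isClosed_Efund.measurableSet

lemma measure_Efund_lt_top (hμ : μ (closedBall (0:ℚ_[p]) 1) = 1) : μ (Efund p m) < ⊤ :=
  lt_of_le_of_lt (measure_mono Efund_subset) (by rw [hμ]; exact ENNReal.one_lt_top)

lemma isFiniteRestrict (hμ : μ (closedBall (0:ℚ_[p]) 1) = 1) :
    IsFiniteMeasure (μ.restrict (Efund p m)) :=
  ⟨by rw [Measure.restrict_apply_univ]; exact measure_Efund_lt_top hμ⟩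

end DopAux

namespace DopAux
variable {p m : ℕ} [Fact p.Prime]
variable {f : ℚ_[p] → ℝ} {n : ℕ} {M : ℝ}

lemma kernel_bound
    (hn : ∀ x ∈ Efund p m, ∀ y ∈ Efund p m, ‖y - x‖ ≤ (p:ℝ)^(-(n:ℤ)) → f y = f x)
    (hM : ∀ x ∈ Efund p m, |f x| ≤ M)
    {x z : ℚ_[p]} (hx : x ∈ Efund p m) (hz : z ∈ Efund p m) :
    |(f z - f x) / ‖z - x‖ ^ 2| ≤ (2 * M) / ((p:ℝ) ^ (-(n:ℤ))) ^ 2 := by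
  have hM0 : 0 ≤ M := le_trans (abs_nonneg _) (hM x hx)
  refine abs_div_le (zpow_pos hp_pos _) (by linarith) (norm_nonneg _) ?_ ?_
  · intro h; rw [hn x hx z hz h, sub_self]
  · have := abs_add_le (f z) (-(f x))
    simp only [abs_neg, ← sub_eq_add_neg] at this
    have h1 := hM z hz; have h2 := hM x hx
    linarith

variable [MeasurableSpace ℚ_[p]] [BorelSpace ℚ_[p]] {μ : Measure ℚ_[p]}

lemma kernel_aesm (hf : LocConstOn p m f) (x : ℚ_[p]) :
    AEStronglyMeasurable (fun z => (f z - f x) / ‖z - x‖ ^ 2) (μ.restrict (Efund p m)) := by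
  have hfm : AEStronglyMeasurable f (μ.restrict (Efund p m)) :=
    (continuousOn_of_locConst hf).aestronglyMeasurable measurableSet_Efund
  have h : (fun z => (f z - f x) / ‖z - x‖ ^ 2)
      = fun z => (f z - f x) * (‖z - x‖ ^ 2)⁻¹ := by
    funext z; rw [div_eq_mul_inv]
  rw [h]
  exact (hfm.sub aestronglyMeasurable_const).mul
    ((((continuous_norm.comp (continuous_id.sub continuous_const)).pow 2).measurable.inv).aestronglyMeasurable)

lemma integrableOn_kernel (hμ : μ (closedBall (0:ℚ_[p]) 1) = 1) (hf : LocConstOn p m f)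
    (hn : ∀ x ∈ Efund p m, ∀ y ∈ Efund p m, ‖y - x‖ ≤ (p:ℝ)^(-(n:ℤ)) → f y = f x)
    (hM : ∀ x ∈ Efund p m, |f x| ≤ M)
    {x : ℚ_[p]} (hx : x ∈ Efund p m) :
    IntegrableOn (fun z => (f z - f x) / ‖z - x‖ ^ 2) (Efund p m) μ := by
  haveI := isFiniteRestrict (m := m) (μ := μ) hμ
  refine Integrable.mono' (integrable_const ((2 * M) / ((p:ℝ) ^ (-(n:ℤ))) ^ 2))
    (kernel_aesm hf x) ?_
  filter_upwards [ae_restrict_mem measurableSet_Efund] with z hz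
  rw [Real.norm_eq_abs]
  exact kernel_bound hn hM hx hz

lemma inner_congr
    (hn : ∀ x ∈ Efund p m, ∀ y ∈ Efund p m, ‖y - x‖ ≤ (p:ℝ)^(-(n:ℤ)) → f y = f x)
    {x x' : ℚ_[p]} (hx : x ∈ Efund p m) (hx' : x' ∈ Efund p m)
    (hxx : ‖x' - x‖ ≤ (p:ℝ)^(-(n:ℤ))) {z : ℚ_[p]} (hz : z ∈ Efund p m) :
    (f z - f x') / ‖z - x'‖ ^ 2 = (f z - f x) / ‖z - x‖ ^ 2 := by
  have hfx : f x' = f x := hn x hx x' hx' hxx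
  rcases le_or_gt ‖z - x‖ ((p:ℝ)^(-(n:ℤ))) with h | h
  · have h1 : f z - f x = 0 := by rw [hn x hx z hz h, sub_self]
    have h2 : ‖z - x'‖ ≤ (p:ℝ)^(-(n:ℤ)) := le_trans norm_sub_max (max_le h hxx)
    have h3 : f z - f x' = 0 := by rw [hn x' hx' z hz h2, sub_self]
    rw [h1, h3, zero_div, zero_div]
  · rw [norm_sub_eq_of_lt (lt_of_le_of_lt hxx h), hfx]

lemma inner_integral_congr
    (hn : ∀ x ∈ Efund p m, ∀ y ∈ Efund p m, ‖y - x‖ ≤ (p:ℝ)^(-(n:ℤ)) → f y = f x)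
    {x x' : ℚ_[p]} (hx : x ∈ Efund p m) (hx' : x' ∈ Efund p m)
    (hxx : ‖x' - x‖ ≤ (p:ℝ)^(-(n:ℤ))) :
    ∫ z in Efund p m, (f z - f x') / ‖z - x'‖ ^ 2 ∂μ
      = ∫ z in Efund p m, (f z - f x) / ‖z - x‖ ^ 2 ∂μ :=
  setIntegral_congr_fun measurableSet_Efund (fun z hz => inner_congr hn hx hx' hxx hz)

lemma continuousOn_inner
    (hn : ∀ x ∈ Efund p m, ∀ y ∈ Efund p m, ‖y - x‖ ≤ (p:ℝ)^(-(n:ℤ)) → f y = f x) :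
    ContinuousOn (fun x => ∫ z in Efund p m, (f z - f x) / ‖z - x‖ ^ 2 ∂μ) (Efund p m) := by
  intro x hx
  have hev : ∀ᶠ y in nhdsWithin x (Efund p m),
      (∫ z in Efund p m, (f z - f y) / ‖z - y‖ ^ 2 ∂μ)
        = ∫ z in Efund p m, (f z - f x) / ‖z - x‖ ^ 2 ∂μ := by
    filter_upwards [inter_mem_nhdsWithin (Efund p m)
      (closedBall_mem_nhds x (zpow_pos (hp_pos (p := p)) (-(n:ℤ))))] with y hy
    exact inner_integral_congr hn hx hy.1
      (by simpa [mem_closedBall, dist_eq_norm] using hy.2)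
  exact (continuousWithinAt_const (b := ∫ z in Efund p m, (f z - f x) / ‖z - x‖ ^ 2 ∂μ)).congr_of_eventuallyEq hev rfl

lemma inner_bound (hμ : μ (closedBall (0:ℚ_[p]) 1) = 1)
    (hn : ∀ x ∈ Efund p m, ∀ y ∈ Efund p m, ‖y - x‖ ≤ (p:ℝ)^(-(n:ℤ)) → f y = f x)
    (hM : ∀ x ∈ Efund p m, |f x| ≤ M)
    {x : ℚ_[p]} (hx : x ∈ Efund p m) :
    |∫ z in Efund p m, (f z - f x) / ‖z - x‖ ^ 2 ∂μ|
      ≤ (2 * M) / ((p:ℝ) ^ (-(n:ℤ))) ^ 2 * (μ (Efund p m)).toReal := by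
  rw [← Real.norm_eq_abs]
  refine norm_setIntegral_le_of_norm_le_const (measure_Efund_lt_top hμ) ?_
  intro z hz; rw [Real.norm_eq_abs]; exact kernel_bound hn hM hx hz

end DopAux

namespace DopAux
variable {p m : ℕ} [Fact p.Prime]
variable [MeasurableSpace ℚ_[p]] [BorelSpace ℚ_[p]] {μ : Measure ℚ_[p]}

lemma isFiniteMul (hμ : μ (closedBall (0:ℚ_[p]) 1) = 1) :
    IsFiniteMeasure ((mulMeasure p μ).restrict (Efund p m)) := by
  constructor
  rw [Measure.restrict_apply_univ, mulMeasure,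
    withDensity_apply _ (measurableSet_Efund (m := m))]
  calc ∫⁻ x in Efund p m, ENNReal.ofReal (1 / ‖x‖) ∂μ
      ≤ ∫⁻ _ in Efund p m, ENNReal.ofReal (1 / (p:ℝ) ^ (1 - (m:ℤ))) ∂μ := by
        refine setLIntegral_mono' measurableSet_Efund (fun x hx => ?_)
        exact ENNReal.ofReal_le_ofReal
          (one_div_le_one_div_of_le (zpow_pos hp_pos _) hx.1)
    _ = ENNReal.ofReal (1 / (p:ℝ) ^ (1 - (m:ℤ))) * μ (Efund p m) := setLIntegral_const _ _
    _ < ⊤ := ENNReal.mul_lt_top ENNReal.ofReal_lt_top (measure_Efund_lt_top hμ)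

lemma mul_integral (h : ℚ_[p] → ℝ) :
    ∫ x in Efund p m, h x ∂(mulMeasure p μ)
      = ∫ x in Efund p m, (1 / ‖x‖) * h x ∂μ := by
  have hd : Measurable fun x : ℚ_[p] => Real.toNNReal (1 / ‖x‖) :=
    (measurable_const.div continuous_norm.measurable).real_toNNReal
  have e1 : mulMeasure p μ
      = μ.withDensity (fun x => ((Real.toNNReal (1 / ‖x‖) : ℝ≥0) : ℝ≥0∞)) := rfl
  rw [e1, restrict_withDensity (measurableSet_Efund (m := m)),
    integral_withDensity_eq_integral_smul hd]
  refine integral_congr_ae (Filter.Eventually.of_forall fun x => ?_)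
  have h0 : (0:ℝ) ≤ 1 / ‖x‖ := by positivity
  simp only [NNReal.smul_def, smul_eq_mul, Real.coe_toNNReal _ h0]

end DopAux

namespace DopAux

lemma div_comb (a b c e d : ℝ) : a / d * b - c * (e / d) = (a * b - c * e) / d := by
  rw [div_mul_eq_mul_div, mul_div_assoc', ← sub_div]

end DopAux

open DopAux in
/-- The operator `D` is self-adjoint with respect to the pairing
`⟨f,g⟩ = ∫_E f g dμ×`: for all locally constant `f, g : E → ℝ`, the integrals defining
`(Df)(x)` and `(Dg)(x)` converge absolutely for every `x ∈ E`, and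
`∫_E (Df) g dμ× = ∫_E f (Dg) dμ×`, both integrals being finite. -/
theorem Dop_selfAdjoint (p m : ℕ) [Fact p.Prime] (hm : 1 ≤ m)
    [MeasurableSpace ℚ_[p]] [BorelSpace ℚ_[p]]
    (μ : Measure ℚ_[p]) [μ.IsAddHaarMeasure]
    (hμ : μ (Metric.closedBall 0 1) = 1)
    (f g : ℚ_[p] → ℝ) (hf : LocConstOn p m f) (hg : LocConstOn p m g) :
    (∀ x ∈ Efund p m,
      IntegrableOn (fun z => (f z - f x) / ‖z - x‖ ^ 2) (Efund p m) μ) ∧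
    (∀ x ∈ Efund p m,
      IntegrableOn (fun z => (g z - g x) / ‖z - x‖ ^ 2) (Efund p m) μ) ∧
    IntegrableOn (fun x => Dop p m μ f x * g x) (Efund p m) (mulMeasure p μ) ∧
    IntegrableOn (fun x => f x * Dop p m μ g x) (Efund p m) (mulMeasure p μ) ∧
    ∫ x in Efund p m, Dop p m μ f x * g x ∂(mulMeasure p μ) =
      ∫ x in Efund p m, f x * Dop p m μ g x ∂(mulMeasure p μ) := by
  classical
  set E := Efund p m with hE
  -- uniform local constancy with a common modulus
  obtain ⟨nf, hnf⟩ := uniform hf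
  obtain ⟨ng, hng⟩ := uniform hg
  set n : ℕ := max nf ng with hn_def
  set r : ℝ := (p:ℝ) ^ (-(n:ℤ)) with hr_def
  have hr : 0 < r := zpow_pos hp_pos _
  have hrf : r ≤ (p:ℝ) ^ (-(nf:ℤ)) :=
    zpow_le_zpow_right₀ (hp_one (p := p)).le (by simp [hn_def])
  have hrg : r ≤ (p:ℝ) ^ (-(ng:ℤ)) :=
    zpow_le_zpow_right₀ (hp_one (p := p)).le (by simp [hn_def])
  have hnf' : ∀ x ∈ E, ∀ y ∈ E, ‖y - x‖ ≤ r → f y = f x :=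
    fun x hx y hy h => hnf x hx y hy (le_trans h hrf)
  have hng' : ∀ x ∈ E, ∀ y ∈ E, ‖y - x‖ ≤ r → g y = g x :=
    fun x hx y hy h => hng x hx y hy (le_trans h hrg)
  obtain ⟨Mf, hMf0, hMf⟩ := exists_bound hf
  obtain ⟨Mg, hMg0, hMg⟩ := exists_bound hg
  -- kernel integrability
  have hif : ∀ x ∈ E, IntegrableOn (fun z => (f z - f x) / ‖z - x‖ ^ 2) E μ :=
    fun x hx => integrableOn_kernel hμ hf hnf' hMf hx
  have hig : ∀ x ∈ E, IntegrableOn (fun z => (g z - g x) / ‖z - x‖ ^ 2) E μ :=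
    fun x hx => integrableOn_kernel hμ hg hng' hMg hx
  -- finiteness of the restricted measures
  haveI hfin : IsFiniteMeasure (μ.restrict E) := isFiniteRestrict hμ
  haveI hfinM : IsFiniteMeasure ((mulMeasure p μ).restrict E) := isFiniteMul hμ
  -- the inner integrals
  set If : ℚ_[p] → ℝ := fun x => ∫ z in E, (f z - f x) / ‖z - x‖ ^ 2 ∂μ with hIf
  set Ig : ℚ_[p] → ℝ := fun x => ∫ z in E, (g z - g x) / ‖z - x‖ ^ 2 ∂μ with hIg
  have hDf : ∀ x, Dop p m μ f x = ‖x‖ * If x := fun x => rfl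
  have hDg : ∀ x, Dop p m μ g x = ‖x‖ * Ig x := fun x => rfl
  set Cf : ℝ := (2 * Mf) / r ^ 2 * (μ E).toReal with hCf
  set Cg : ℝ := (2 * Mg) / r ^ 2 * (μ E).toReal with hCg
  have hCf0 : 0 ≤ Cf :=
    mul_nonneg (div_nonneg (by linarith) (sq_nonneg _)) ENNReal.toReal_nonneg
  have hCg0 : 0 ≤ Cg :=
    mul_nonneg (div_nonneg (by linarith) (sq_nonneg _)) ENNReal.toReal_nonneg
  have hIfb : ∀ x ∈ E, |If x| ≤ Cf := fun x hx => inner_bound hμ hnf' hMf hx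
  have hIgb : ∀ x ∈ E, |Ig x| ≤ Cg := fun x hx => inner_bound hμ hng' hMg hx
  have hIfc : ContinuousOn If E := continuousOn_inner hnf'
  have hIgc : ContinuousOn Ig E := continuousOn_inner hng'
  have hfc : ContinuousOn f E := continuousOn_of_locConst hf
  have hgc : ContinuousOn g E := continuousOn_of_locConst hg
  -- integrability of the two products w.r.t. the multiplicative measure
  have key1 : IntegrableOn (fun x => Dop p m μ f x * g x) E (mulMeasure p μ) := by
    have hc : ContinuousOn (fun x => Dop p m μ f x * g x) E :=
      (continuous_norm.continuousOn.mul hIfc).mul hgc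
    refine Integrable.mono' (integrable_const (Cf * Mg))
      (hc.aestronglyMeasurable measurableSet_Efund) ?_
    filter_upwards [ae_restrict_mem measurableSet_Efund] with x hx
    rw [Real.norm_eq_abs, hDf, abs_mul, abs_mul, abs_norm]
    calc ‖x‖ * |If x| * |g x| ≤ 1 * Cf * Mg := by
          refine mul_le_mul (mul_le_mul hx.2 (hIfb x hx) (abs_nonneg _) zero_le_one)
            (hMg x hx) (abs_nonneg _) (by linarith)
      _ = Cf * Mg := by ring
  have key2 : IntegrableOn (fun x => f x * Dop p m μ g x) E (mulMeasure p μ) := by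
    have hc : ContinuousOn (fun x => f x * Dop p m μ g x) E :=
      hfc.mul (continuous_norm.continuousOn.mul hIgc)
    refine Integrable.mono' (integrable_const (Mf * Cg))
      (hc.aestronglyMeasurable measurableSet_Efund) ?_
    filter_upwards [ae_restrict_mem measurableSet_Efund] with x hx
    rw [Real.norm_eq_abs, hDg, abs_mul, abs_mul, abs_norm]
    calc |f x| * (‖x‖ * |Ig x|) ≤ Mf * (1 * Cg) := by
          refine mul_le_mul (hMf x hx)
            (mul_le_mul hx.2 (hIgb x hx) (abs_nonneg _) zero_le_one)
            (mul_nonneg (norm_nonneg _) (abs_nonneg _)) hMf0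
      _ = Mf * Cg := by rw [one_mul]
  refine ⟨hif, hig, key1, key2, ?_⟩
  -- convert the mulMeasure integrals to additive-measure integrals
  have conv1 : ∫ x in E, Dop p m μ f x * g x ∂(mulMeasure p μ)
      = ∫ x in E, If x * g x ∂μ := by
    rw [mul_integral]
    refine setIntegral_congr_fun measurableSet_Efund (fun x hx => ?_)
    have h0 : ‖x‖ ≠ 0 := (norm_pos_of_mem hx).ne'
    rw [hDf]; field_simp
  have conv2 : ∫ x in E, f x * Dop p m μ g x ∂(mulMeasure p μ)
      = ∫ x in E, f x * Ig x ∂μ := by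
    rw [mul_integral]
    refine setIntegral_congr_fun measurableSet_Efund (fun x hx => ?_)
    have h0 : ‖x‖ ≠ 0 := (norm_pos_of_mem hx).ne'
    rw [hDg]; field_simp
  -- integrability of the two products w.r.t. the additive measure on E
  have keyint1 : IntegrableOn (fun x => If x * g x) E μ := by
    refine Integrable.mono' (integrable_const (Cf * Mg))
      ((hIfc.mul hgc).aestronglyMeasurable measurableSet_Efund) ?_
    filter_upwards [ae_restrict_mem measurableSet_Efund] with x hx
    rw [Real.norm_eq_abs, abs_mul]
    exact mul_le_mul (hIfb x hx) (hMg x hx) (abs_nonneg _) hCf0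
  have keyint2 : IntegrableOn (fun x => f x * Ig x) E μ := by
    refine Integrable.mono' (integrable_const (Mf * Cg))
      ((hfc.mul hIgc).aestronglyMeasurable measurableSet_Efund) ?_
    filter_upwards [ae_restrict_mem measurableSet_Efund] with x hx
    rw [Real.norm_eq_abs, abs_mul]
    exact mul_le_mul (hMf x hx) (hIgb x hx) (abs_nonneg _) hMf0
  -- the antisymmetric kernel
  set H : ℚ_[p] → ℚ_[p] → ℝ :=
    fun x z => ((f z - f x) * g x - f x * (g z - g x)) / ‖z - x‖ ^ 2 with hH
  have hpoint : ∀ x ∈ E, If x * g x - f x * Ig x = ∫ z in E, H x z ∂μ := by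
    intro x hx
    calc If x * g x - f x * Ig x
        = (∫ z in E, ((f z - f x) / ‖z - x‖ ^ 2) * g x ∂μ)
          - ∫ z in E, f x * ((g z - g x) / ‖z - x‖ ^ 2) ∂μ := by
          rw [integral_mul_const, integral_const_mul, hIf, hIg]
      _ = ∫ z in E, (((f z - f x) / ‖z - x‖ ^ 2) * g x
            - f x * ((g z - g x) / ‖z - x‖ ^ 2)) ∂μ :=
          (integral_sub ((hif x hx).mul_const _) ((hig x hx).const_mul _)).symm
      _ = ∫ z in E, H x z ∂μ :=
          setIntegral_congr_fun measurableSet_Efund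
            (fun z _ => div_comb _ _ _ _ _)
  -- product integrability of H
  set ν := μ.restrict E with hν
  have hfm : AEStronglyMeasurable f ν := hfc.aestronglyMeasurable measurableSet_Efund
  have hgm : AEStronglyMeasurable g ν := hgc.aestronglyMeasurable measurableSet_Efund
  have hHm : AEStronglyMeasurable (fun q : ℚ_[p] × ℚ_[p] => H q.1 q.2) (ν.prod ν) := by
    have e : (fun q : ℚ_[p] × ℚ_[p] => H q.1 q.2)
        = fun q => ((f q.2 - f q.1) * g q.1 - f q.1 * (g q.2 - g q.1))
            * (‖q.2 - q.1‖ ^ 2)⁻¹ := by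
      funext q; rw [hH]; exact div_eq_mul_inv _ _
    rw [e]
    have hden : Measurable fun q : ℚ_[p] × ℚ_[p] => (‖q.2 - q.1‖ ^ 2)⁻¹ :=
      (((continuous_snd.sub continuous_fst).norm.pow 2).measurable).inv
    exact (((hfm.comp_snd.sub hfm.comp_fst).mul hgm.comp_fst).sub
      (hfm.comp_fst.mul (hgm.comp_snd.sub hgm.comp_fst))).mul hden.aestronglyMeasurable
  have hHbound : ∀ x ∈ E, ∀ z ∈ E,
      |H x z| ≤ (2 * Mf * Mg + Mf * (2 * Mg)) / r ^ 2 := by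
    intro x hx z hz
    refine abs_div_le hr (by nlinarith) (norm_nonneg _) ?_ ?_
    · intro h
      rw [hnf' x hx z hz h, hng' x hx z hz h]; ring
    · have h1 : |f z - f x| ≤ 2 * Mf :=
        le_trans (abs_sub _ _) (by have := hMf z hz; have := hMf x hx; linarith)
      have h2 : |g z - g x| ≤ 2 * Mg :=
        le_trans (abs_sub _ _) (by have := hMg z hz; have := hMg x hx; linarith)
      calc |(f z - f x) * g x - f x * (g z - g x)|
          ≤ |(f z - f x) * g x| + |f x * (g z - g x)| := abs_sub _ _
        _ ≤ 2 * Mf * Mg + Mf * (2 * Mg) := by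
            rw [abs_mul, abs_mul]
            exact add_le_add
              (mul_le_mul h1 (hMg x hx) (abs_nonneg _) (by linarith))
              (mul_le_mul (hMf x hx) h2 (abs_nonneg _) hMf0)
  have hHint : Integrable (fun q : ℚ_[p] × ℚ_[p] => H q.1 q.2) (ν.prod ν) := by
    refine Integrable.mono'
      (integrable_const ((2 * Mf * Mg + Mf * (2 * Mg)) / r ^ 2)) hHm ?_
    rw [hν, Measure.prod_restrict]
    filter_upwards [ae_restrict_mem (measurableSet_Efund.prod measurableSet_Efund)] with q hq
    rw [Real.norm_eq_abs]
    exact hHbound q.1 hq.1 q.2 hq.2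
  -- vanishing of the double integral by antisymmetry
  have hanti : ∀ x z : ℚ_[p], H z x = - H x z := by
    intro x z
    rw [hH]; dsimp only
    rw [show ‖x - z‖ = ‖z - x‖ from norm_sub_rev _ _]
    ring
  have hswap : ∫ q : ℚ_[p] × ℚ_[p], H q.1 q.2 ∂(ν.prod ν) = 0 := by
    have e1 : ∫ q : ℚ_[p] × ℚ_[p], H q.1 q.2 ∂(ν.prod ν)
        = ∫ q : ℚ_[p] × ℚ_[p], H q.2 q.1 ∂(ν.prod ν) :=
      (integral_prod_swap (fun q : ℚ_[p] × ℚ_[p] => H q.1 q.2)).symm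
    have e2 : ∫ q : ℚ_[p] × ℚ_[p], H q.2 q.1 ∂(ν.prod ν)
        = - ∫ q : ℚ_[p] × ℚ_[p], H q.1 q.2 ∂(ν.prod ν) := by
      rw [← integral_neg]
      exact integral_congr_ae (Filter.Eventually.of_forall fun q => hanti q.1 q.2)
    linarith
  have hfub : ∫ x in E, (∫ z in E, H x z ∂μ) ∂μ
      = ∫ q : ℚ_[p] × ℚ_[p], H q.1 q.2 ∂(ν.prod ν) := integral_integral hHint
  -- conclude
  have final : ∫ x in E, If x * g x ∂μ = ∫ x in E, f x * Ig x ∂μ := by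
    have hz : (∫ x in E, If x * g x ∂μ) - ∫ x in E, f x * Ig x ∂μ = 0 := by
      rw [← integral_sub keyint1 keyint2,
        setIntegral_congr_fun (μ := μ) measurableSet_Efund
          (g := fun x => ∫ z in E, H x z ∂μ) (fun x hx => hpoint x hx),
        hfub, hswap]
    linarith
  rw [conv1, conv2, final]
end
end

section
/- The operator D is negative semi-definite: for every locally constant function f : E → ℝ, ∫_E (Df)(x) f(x) dμ×(x) ≤ 0. -/
open MeasureTheory

noncomputable section

/-- The operator `D` is negative semi-definite: for every locally
constant `f : E → ℝ`, `∫_E (Df)(x) f(x) dμ×(x) ≤ 0`. -/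
theorem Dop_negSemidef (p m : ℕ) [Fact p.Prime] (hm : 1 ≤ m)
    [MeasurableSpace ℚ_[p]] [BorelSpace ℚ_[p]]
    (μ : Measure ℚ_[p]) [μ.IsAddHaarMeasure]
    (hμ : μ (Metric.closedBall 0 1) = 1)
    (f : ℚ_[p] → ℝ) (hf : LocConstOn p m f) :
    ∫ x in Efund p m, Dop p m μ f x * f x ∂(mulMeasure p μ) ≤ 0 := by
  have hp1 : (1:ℝ) < (p:ℝ) := by exact_mod_cast (Fact.out : p.Prime).one_lt
  have hp0 : (0:ℝ) < (p:ℝ) := one_pos.trans hp1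
  -- Basic facts about `E`
  have hA_closed : IsClosed (Efund p m) := by
    have : Efund p m = (fun x : ℚ_[p] => ‖x‖) ⁻¹' Set.Icc ((p:ℝ) ^ (1 - (m:ℤ))) 1 := rfl
    rw [this]
    exact isClosed_Icc.preimage continuous_norm
  have hA_meas : MeasurableSet (Efund p m) := hA_closed.measurableSet
  have hA_sub : Efund p m ⊆ Metric.closedBall 0 1 := fun x hx => by
    rw [Metric.mem_closedBall, dist_zero_right]; exact hx.2
  have hA_cpt : IsCompact (Efund p m) :=
    (isCompact_closedBall (0:ℚ_[p]) 1).of_isClosed_subset hA_closed hA_sub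
  -- Uniform local constancy
  obtain ⟨N, hN⟩ : ∃ N : ℕ, ∀ x ∈ Efund p m, ∀ y ∈ Efund p m,
      ‖y - x‖ ≤ (p:ℝ) ^ (-(N:ℤ)) → f y = f x := by
    choose n hn using hf
    obtain ⟨t, ht⟩ := hA_cpt.elim_nhds_subcover'
      (fun x hx => Metric.ball x ((p:ℝ) ^ (-(n x hx : ℤ))))
      (fun x hx => Metric.ball_mem_nhds _ (by positivity))
    refine ⟨t.sup (fun c => n c.1 c.2), fun x hx y hy hxy => ?_⟩
    obtain ⟨c, hct, hxc⟩ := Set.mem_iUnion₂.1 (ht hx)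
    have h1 : ‖x - c.1‖ ≤ (p:ℝ) ^ (-(n c.1 c.2 : ℤ)) := by
      rw [Metric.mem_ball, dist_eq_norm] at hxc
      exact hxc.le
    have hmono : (p:ℝ) ^ (-(((t.sup (fun c => n c.1 c.2) : ℕ)) : ℤ)) ≤ (p:ℝ) ^ (-(n c.1 c.2 : ℤ)) := by
      apply zpow_le_zpow_right₀ hp1.le
      have hle : n c.1 c.2 ≤ t.sup (fun c => n c.1 c.2) :=
        Finset.le_sup (f := fun c => n c.1 c.2) hct
      exact neg_le_neg (by exact_mod_cast hle)
    have h2 : ‖y - c.1‖ ≤ (p:ℝ) ^ (-(n c.1 c.2 : ℤ)) := by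
      have hna : ‖y - c.1‖ ≤ max ‖y - x‖ ‖x - c.1‖ := by
        have := Padic.nonarchimedean (y - x) (x - c.1)
        simpa using this
      exact hna.trans (max_le (hxy.trans hmono) h1)
    rw [hn c.1 c.2 y hy h2, hn c.1 c.2 x hx h1]
  -- Continuity of `f` on `E`
  have hcont : ContinuousOn f (Efund p m) := by
    intro x hx
    obtain ⟨n, hn⟩ := hf x hx
    have hev : ∀ᶠ y in nhdsWithin x (Efund p m), f y = f x := by
      filter_upwards [nhdsWithin_le_nhds
        (Metric.ball_mem_nhds x (show (0:ℝ) < (p:ℝ) ^ (-(n:ℤ)) by positivity)),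
        self_mem_nhdsWithin] with y hy hyA
      refine hn y hyA ?_
      rw [Metric.mem_ball, dist_eq_norm] at hy
      exact hy.le
    exact Filter.Tendsto.congr' (hev.mono fun y hy => hy.symm) tendsto_const_nhds
  -- Bound on `f`
  obtain ⟨M0, hM0⟩ := hA_cpt.exists_bound_of_continuousOn hcont
  have hM : ∀ x ∈ Efund p m, |f x| ≤ max M0 0 := fun x hx => by
    have := hM0 x hx
    rw [Real.norm_eq_abs] at this
    exact this.trans (le_max_left _ _)
  have hMnonneg : (0:ℝ) ≤ max M0 0 := le_max_right _ _
  -- finiteness of restricted measure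
  haveI hρfin : IsFiniteMeasure (μ.restrict (Efund p m)) := by
    constructor
    rw [Measure.restrict_apply_univ]
    exact (measure_mono hA_sub).trans_lt (by rw [hμ]; exact ENNReal.one_lt_top)
  -- Step 1: convert to iterated integral against the additive measure
  have hdens : Measurable fun x : ℚ_[p] => Real.toNNReal (1/‖x‖) :=
    (measurable_const.div measurable_norm).real_toNNReal
  have step1 : ∫ x in Efund p m, Dop p m μ f x * f x ∂(mulMeasure p μ)
      = ∫ x in Efund p m, (∫ z in Efund p m, (f z - f x) / ‖z - x‖ ^ 2 * f x ∂μ) ∂μ := by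
    have hwd : mulMeasure p μ
        = μ.withDensity fun x => ((Real.toNNReal (1/‖x‖) : NNReal) : ENNReal) := rfl
    rw [hwd, setIntegral_withDensity_eq_setIntegral_smul hdens _ hA_meas]
    refine setIntegral_congr_fun hA_meas fun x hx => ?_
    have hx0 : (0:ℝ) < ‖x‖ := lt_of_lt_of_le (by positivity) hx.1
    rw [NNReal.smul_def, Real.coe_toNNReal _ (by positivity), smul_eq_mul,
      integral_mul_const, Dop]
    field_simp
  rw [step1]
  -- Integrability of the kernel on the product
  have hprodrw : (μ.restrict (Efund p m)).prod (μ.restrict (Efund p m))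
      = (μ.prod μ).restrict (Efund p m ×ˢ Efund p m) :=
    Measure.prod_restrict _ _
  have hKmeas : AEStronglyMeasurable
      (fun q : ℚ_[p] × ℚ_[p] => (f q.2 - f q.1) / ‖q.2 - q.1‖ ^ 2 * f q.1)
      ((μ.restrict (Efund p m)).prod (μ.restrict (Efund p m))) := by
    rw [hprodrw]
    have hAA : MeasurableSet (Efund p m ×ˢ Efund p m) := hA_meas.prod hA_meas
    have h1 : AEMeasurable (fun q : ℚ_[p] × ℚ_[p] => f q.1)
        ((μ.prod μ).restrict (Efund p m ×ˢ Efund p m)) :=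
      (hcont.comp continuous_fst.continuousOn fun q hq => hq.1).aemeasurable hAA
    have h2 : AEMeasurable (fun q : ℚ_[p] × ℚ_[p] => f q.2)
        ((μ.prod μ).restrict (Efund p m ×ˢ Efund p m)) :=
      (hcont.comp continuous_snd.continuousOn fun q hq => hq.2).aemeasurable hAA
    have h3 : Measurable (fun q : ℚ_[p] × ℚ_[p] => ‖q.2 - q.1‖ ^ 2) :=
      ((continuous_snd.sub continuous_fst).norm.pow 2).measurable
    exact (((h2.sub h1).div h3.aemeasurable).mul h1).aestronglyMeasurable
  -- pointwise bound
  have hbound : ∀ x ∈ Efund p m, ∀ z ∈ Efund p m,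
      |(f z - f x) / ‖z - x‖ ^ 2 * f x|
        ≤ (2 * max M0 0) / ((p:ℝ) ^ (-(N:ℤ))) ^ 2 * max M0 0 := by
    intro x hx z hz
    rcases le_or_gt ‖z - x‖ ((p:ℝ) ^ (-(N:ℤ))) with h | h
    · have hz0 : f z = f x := hN x hx z hz h
      rw [hz0]
      simp only [sub_self, zero_div, zero_mul, abs_zero]
      positivity
    · have hd0 : (0:ℝ) < ‖z - x‖ := lt_trans (by positivity) h
      rw [abs_mul, abs_div]
      have hnum : |f z - f x| ≤ 2 * max M0 0 := by
        have := hM z hz; have := hM x hx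
        calc |f z - f x| ≤ |f z| + |f x| := abs_sub _ _
          _ ≤ max M0 0 + max M0 0 := add_le_add (hM z hz) (hM x hx)
          _ = 2 * max M0 0 := by ring
      have habs : |‖z - x‖ ^ 2| = ‖z - x‖ ^ 2 := abs_of_nonneg (by positivity)
      rw [habs]
      have hdiv : |f z - f x| / ‖z - x‖ ^ 2
          ≤ (2 * max M0 0) / ((p:ℝ) ^ (-(N:ℤ))) ^ 2 := by
        apply div_le_div₀ (by positivity) hnum (by positivity)
        exact pow_le_pow_left₀ (by positivity) h.le 2
      exact mul_le_mul hdiv (hM x hx) (abs_nonneg _) (by positivity)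
  have hKint : Integrable
      (fun q : ℚ_[p] × ℚ_[p] => (f q.2 - f q.1) / ‖q.2 - q.1‖ ^ 2 * f q.1)
      ((μ.restrict (Efund p m)).prod (μ.restrict (Efund p m))) := by
    have hae : ∀ᵐ q ∂((μ.restrict (Efund p m)).prod (μ.restrict (Efund p m))),
        q ∈ Efund p m ×ˢ Efund p m := by
      rw [hprodrw]
      exact ae_restrict_mem (hA_meas.prod hA_meas)
    refine Integrable.mono'
      (integrable_const ((2 * max M0 0) / ((p:ℝ) ^ (-(N:ℤ))) ^ 2 * max M0 0)) hKmeas ?_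
    filter_upwards [hae] with q hq
    rw [Real.norm_eq_abs]
    exact hbound q.1 hq.1 q.2 hq.2
  have hKint' : Integrable
      (fun q : ℚ_[p] × ℚ_[p] => (f q.1 - f q.2) / ‖q.1 - q.2‖ ^ 2 * f q.2)
      ((μ.restrict (Efund p m)).prod (μ.restrict (Efund p m))) := hKint.swap
  -- Fubini and symmetrization
  have h1 := integral_prod
    (fun q : ℚ_[p] × ℚ_[p] => (f q.2 - f q.1) / ‖q.2 - q.1‖ ^ 2 * f q.1) hKint
  have h2 : ∫ q, (f q.2 - f q.1) / ‖q.2 - q.1‖ ^ 2 * f q.1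
        ∂((μ.restrict (Efund p m)).prod (μ.restrict (Efund p m)))
      = ∫ q, (f q.1 - f q.2) / ‖q.1 - q.2‖ ^ 2 * f q.2
        ∂((μ.restrict (Efund p m)).prod (μ.restrict (Efund p m))) :=
    by
      have := integral_prod_swap (μ := μ.restrict (Efund p m)) (ν := μ.restrict (Efund p m))
        (fun q : ℚ_[p] × ℚ_[p] => (f q.1 - f q.2) / ‖q.1 - q.2‖ ^ 2 * f q.2)
      simpa [Prod.swap] using this
  have h3 : ∫ q, ((f q.2 - f q.1) / ‖q.2 - q.1‖ ^ 2 * f q.1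
        + (f q.1 - f q.2) / ‖q.1 - q.2‖ ^ 2 * f q.2)
        ∂((μ.restrict (Efund p m)).prod (μ.restrict (Efund p m)))
      = (∫ q, (f q.2 - f q.1) / ‖q.2 - q.1‖ ^ 2 * f q.1
          ∂((μ.restrict (Efund p m)).prod (μ.restrict (Efund p m))))
        + ∫ q, (f q.1 - f q.2) / ‖q.1 - q.2‖ ^ 2 * f q.2
          ∂((μ.restrict (Efund p m)).prod (μ.restrict (Efund p m))) :=
    integral_add hKint hKint'
  have h4 : ∫ q, ((f q.2 - f q.1) / ‖q.2 - q.1‖ ^ 2 * f q.1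
        + (f q.1 - f q.2) / ‖q.1 - q.2‖ ^ 2 * f q.2)
        ∂((μ.restrict (Efund p m)).prod (μ.restrict (Efund p m))) ≤ 0 := by
    apply integral_nonpos
    intro q
    dsimp only [Pi.zero_apply]
    have hrev : ‖q.1 - q.2‖ = ‖q.2 - q.1‖ := norm_sub_rev _ _
    have : (f q.2 - f q.1) / ‖q.2 - q.1‖ ^ 2 * f q.1
        + (f q.1 - f q.2) / ‖q.1 - q.2‖ ^ 2 * f q.2
        = -((f q.2 - f q.1) ^ 2 / ‖q.2 - q.1‖ ^ 2) := by
      rw [hrev]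
      ring
    rw [this]
    have : (0:ℝ) ≤ (f q.2 - f q.1) ^ 2 / ‖q.2 - q.1‖ ^ 2 := by positivity
    linarith
  rw [← h1] at *
  linarith [h2, h3, h4]
end
end

section
/- The operator D preserves locally constant functions: if n ≥ m is an integer and f : E → ℝ satisfies f(x + t) = f(x) for all x ∈ E and all t ∈ p^n ℤ_p (note x + t ∈ E), then (Df)(x + t) = (Df)(x) for all x ∈ E and all t ∈ p^n ℤ_p. In particular, if f is locally constant then Df is locally constant. -/
open MeasureTheory

noncomputable section

/-- Ultrametric: adding something strictly smaller does not change the norm. -/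
lemma padic_add_norm_eq {p : ℕ} [Fact p.Prime] (a b : ℚ_[p]) (h : ‖b‖ < ‖a‖) :
    ‖a + b‖ = ‖a‖ := by
  rw [Padic.add_eq_max_of_ne (ne_of_gt h), max_eq_left h.le]

lemma Efund_measurable (p m : ℕ) [Fact p.Prime]
    [MeasurableSpace ℚ_[p]] [BorelSpace ℚ_[p]] :
    MeasurableSet (Efund p m) := by
  have : Efund p m =
      (fun x : ℚ_[p] => ‖x‖) ⁻¹' (Set.Icc ((p : ℝ) ^ (1 - (m : ℤ))) 1) := rfl
  rw [this]
  exact measurableSet_Icc.preimage measurable_norm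

/-- Key pointwise lemma: if `f` is constant on the ball of radius `p^{-n}`
around `x ∈ E` (intersected with `E`), then `Dop f` takes the same value at
`x` and `x + t` for `‖t‖ ≤ p^{-n}`. -/
lemma Dop_key (p m n : ℕ) [Fact p.Prime] (hm : 1 ≤ m) (hn : m ≤ n)
    [MeasurableSpace ℚ_[p]] [BorelSpace ℚ_[p]] (μ : Measure ℚ_[p])
    (f : ℚ_[p] → ℝ) (x : ℚ_[p]) (hx : x ∈ Efund p m) (t : ℚ_[p])
    (ht : ‖t‖ ≤ (p : ℝ) ^ (-(n : ℤ)))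
    (hf : ∀ z ∈ Efund p m, ‖z - x‖ ≤ (p : ℝ) ^ (-(n : ℤ)) → f z = f x) :
    Dop p m μ f (x + t) = Dop p m μ f x := by
  have hp : (1 : ℝ) < p := by exact_mod_cast (Fact.out : p.Prime).one_lt
  have hmono : (p : ℝ) ^ (-(n : ℤ)) < (p : ℝ) ^ (1 - (m : ℤ)) := by
    apply zpow_lt_zpow_right₀ hp; omega
  have htx : ‖t‖ < ‖x‖ := lt_of_le_of_lt ht (lt_of_lt_of_le hmono hx.1)
  have hxt : ‖x + t‖ = ‖x‖ := padic_add_norm_eq x t htx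
  have hxtE : x + t ∈ Efund p m := by
    refine ⟨?_, ?_⟩ <;> rw [hxt]
    · exact hx.1
    · exact hx.2
  have hfxt : f (x + t) = f x := by
    apply hf (x + t) hxtE
    simpa using ht
  unfold Dop
  rw [hxt]
  congr 1
  apply setIntegral_congr_fun (Efund_measurable p m)
  intro z hz
  by_cases hcase : ‖z - x‖ ≤ (p : ℝ) ^ (-(n : ℤ))
  · have hfz : f z = f x := hf z hz hcase
    simp [hfz, hfxt]
  · push_neg at hcase
    have : z - (x + t) = (z - x) + (-t) := by ring
    have hnorm : ‖z - (x + t)‖ = ‖z - x‖ := by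
      rw [this]
      exact padic_add_norm_eq (z - x) (-t)
        (by rw [norm_neg]; exact lt_of_le_of_lt ht hcase)
    show (f z - f (x + t)) / ‖z - (x + t)‖ ^ 2 = (f z - f x) / ‖z - x‖ ^ 2
    rw [hnorm, hfxt]

/-- `D` preserves locally constant functions: if `n ≥ m` and
`f(x + t) = f(x)` for all `x ∈ E` and `t ∈ p^n ℤ_p`, then `(Df)(x + t) = (Df)(x)`
for all `x ∈ E` and `t ∈ p^n ℤ_p`.  In particular, if `f` is locally constant then
`Df` is locally constant. -/
theorem Dop_preserves_locallyConstant (p m : ℕ) [Fact p.Prime] (hm : 1 ≤ m)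
    [MeasurableSpace ℚ_[p]] [BorelSpace ℚ_[p]]
    (μ : Measure ℚ_[p]) [μ.IsAddHaarMeasure]
    (hμ : μ (Metric.closedBall 0 1) = 1) :
    (∀ n : ℕ, m ≤ n → ∀ f : ℚ_[p] → ℝ,
      (∀ x ∈ Efund p m, ∀ t : ℚ_[p], ‖t‖ ≤ (p : ℝ) ^ (-(n : ℤ)) → f (x + t) = f x) →
      ∀ x ∈ Efund p m, ∀ t : ℚ_[p], ‖t‖ ≤ (p : ℝ) ^ (-(n : ℤ)) →
        Dop p m μ f (x + t) = Dop p m μ f x) ∧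
    (∀ f : ℚ_[p] → ℝ, LocConstOn p m f → LocConstOn p m (Dop p m μ f)) := by
  have hp : (1 : ℝ) < p := by exact_mod_cast (Fact.out : p.Prime).one_lt
  constructor
  · intro n hn f hf x hx t ht
    apply Dop_key p m n hm hn μ f x hx t ht
    intro z hz hzx
    have := hf x hx (z - x) hzx
    simpa using this
  · intro f hf x hx
    obtain ⟨k, hk⟩ := hf x hx
    refine ⟨max k m, ?_⟩
    intro y hy hyx
    have hle : (p : ℝ) ^ (-((max k m : ℕ) : ℤ)) ≤ (p : ℝ) ^ (-(k : ℤ)) := by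
      apply zpow_le_zpow_right₀ hp.le
      simp only [neg_le_neg_iff]
      exact_mod_cast le_max_left k m
    have key := Dop_key p m (max k m) hm (le_max_right k m) μ f x hx (y - x)
      hyx (fun z hz hzx => hk z hz (hzx.trans hle))
    simpa using key
end
end

section
/- The operator D preserves conductor: for every integer k ≥ 1, if φ : E → ℝ has conductor k, then Dφ also has conductor k, i.e. (Dφ)(ux) = (Dφ)(x) for all x ∈ E and u ∈ 1 + p^k ℤ_p. -/
open MeasureTheory

noncomputable section

/-- `f : E → ℝ` has conductor `k`: `f(xu) = f(x)` for all `x ∈ E` and all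
`u ∈ 1 + p^k ℤ_p` (note `xu ∈ E`). -/
def HasConductor (p m : ℕ) [Fact p.Prime] (k : ℕ) (f : ℚ_[p] → ℝ) : Prop :=
  ∀ x ∈ Efund p m, ∀ u : ℚ_[p], ‖u - 1‖ ≤ (p : ℝ) ^ (-(k : ℤ)) → f (x * u) = f x

/-- `D` preserves conductor: for every integer `k ≥ 1`, if
`φ : E → ℝ` has conductor `k`, then `Dφ` also has conductor `k`. -/
theorem Dop_preserves_conductor (p m : ℕ) [Fact p.Prime] (hm : 1 ≤ m)
    [MeasurableSpace ℚ_[p]] [BorelSpace ℚ_[p]]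
    (μ : Measure ℚ_[p]) [μ.IsAddHaarMeasure]
    (hμ : μ (Metric.closedBall 0 1) = 1)
    (k : ℕ) (hk : 1 ≤ k) (φ : ℚ_[p] → ℝ) (hφ : HasConductor p m k φ) :
    HasConductor p m k (Dop p m μ φ) := by
  intro x hx u hu
  have hp1 : (1 : ℝ) < p := by exact_mod_cast (Fact.out : p.Prime).one_lt
  have hpk : (p : ℝ) ^ (-(k : ℤ)) < 1 := by
    have : (p : ℝ) ^ (-(k : ℤ)) < (p : ℝ) ^ (0 : ℤ) := by
      apply zpow_lt_zpow_right₀ hp1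
      omega
    simpa using this
  have h1 : ‖u - 1‖ < 1 := lt_of_le_of_lt hu hpk
  have hu1 : ‖u‖ = 1 := by
    have h2 : ‖u - 1 + 1‖ = max ‖u - 1‖ ‖(1 : ℚ_[p])‖ :=
      Padic.add_eq_max_of_ne (by rw [norm_one]; exact h1.ne)
    rw [sub_add_cancel, norm_one] at h2
    rw [h2]; exact max_eq_right h1.le
  have hu0 : u ≠ 0 := by
    intro h; rw [h, norm_zero] at hu1; exact one_ne_zero hu1.symm
  set v : ℚ_[p]ˣ := Units.mk0 u hu0 with hv
  let T : ℚ_[p] ≃ᵐ ℚ_[p] := (Homeomorph.smul v).toMeasurableEquiv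
  have hTz : ∀ z : ℚ_[p], T z = z * u := fun z => mul_comm u z
  have hhaar : (μ.map ⇑T).IsAddHaarMeasure := by
    refine AddEquiv.isAddHaarMeasure_map μ (DistribMulAction.toAddEquiv ℚ_[p] v)
      (continuous_const_smul v) ?_
    show Continuous fun x : ℚ_[p] => v⁻¹ • x
    exact continuous_const_smul _
  have hE : MeasurableSet (Efund p m) := by
    have : Efund p m = {x : ℚ_[p] | (p : ℝ) ^ (1 - (m : ℤ)) ≤ ‖x‖} ∩ {x | ‖x‖ ≤ 1} := rfl
    rw [this]
    exact ((isClosed_le continuous_const continuous_norm).measurableSet).inter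
      ((isClosed_le continuous_norm continuous_const).measurableSet)
  have hmap : μ.map ⇑T = μ := by
    haveI := hhaar
    have h := Measure.isAddLeftInvariant_eq_smul (μ.map ⇑T) μ
    have hball : ⇑T ⁻¹' Metric.closedBall 0 1 = Metric.closedBall 0 1 := by
      ext z
      simp [Metric.mem_closedBall, dist_zero_right, hTz z, norm_mul, hu1]
    have h1' : μ.map ⇑T (Metric.closedBall 0 1) = 1 := by
      rw [MeasurableEquiv.map_apply, hball, hμ]
    rw [h, Measure.smul_apply, hμ] at h1'
    have hc : (μ.map ⇑T).addHaarScalarFactor μ = 1 := by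
      have h2 : ((μ.map ⇑T).addHaarScalarFactor μ : ENNReal) = 1 := by
        simpa [ENNReal.smul_def] using h1'
      exact_mod_cast h2
    rw [h, hc, one_smul]
  have hpre : ⇑T ⁻¹' Efund p m = Efund p m := by
    ext z
    simp only [Set.mem_preimage, Efund, Set.mem_setOf_eq, hTz z, norm_mul, hu1, mul_one]
  have key : ∫ z in Efund p m, (φ z - φ (x * u)) / ‖z - x * u‖ ^ 2 ∂μ
      = ∫ z in Efund p m, (φ z - φ x) / ‖z - x‖ ^ 2 ∂μ := by
    conv_lhs => rw [← hmap]
    rw [MeasureTheory.setIntegral_map_equiv, hpre]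
    apply setIntegral_congr_fun hE
    intro w hw
    simp only [hTz w]
    rw [hφ w hw u hu, hφ x hx u hu]
    congr 2
    rw [show w * u - x * u = (w - x) * u by ring, norm_mul, hu1, mul_one]
  show Dop p m μ φ (x * u) = Dop p m μ φ x
  unfold Dop
  rw [key, norm_mul, hu1, mul_one]
end
end

section
/- For every integer k ≥ 1 there exists a symmetric Green's function on the finite quotient E_k (i.e., a Green's function G on E_k with G(x,y) = G(y,x) for all x, y ∈ E); moreover, any two symmetric Green's functions on E_k differ by a constant: if G₁ and G₂ are symmetric Green's functions on E_k, then there is c ∈ ℝ with G₁(x,y) = G₂(x,y) + c for all x, y ∈ E. -/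
open MeasureTheory

noncomputable section

/-- A Green's function on the finite quotient `E_k`: a function `G : E × E → ℝ` of
conductor `k` in each variable such that for all `x, y ∈ E`,
`(D G(·,y))(x) = p^k · 𝟙[x/y ∈ 1 + p^k ℤ_p] − 1/V` where `V = m (1 − 1/p)`. -/
def IsGreen (p m : ℕ) [Fact p.Prime] [MeasurableSpace ℚ_[p]]
    (μ : Measure ℚ_[p]) (k : ℕ) (G : ℚ_[p] → ℚ_[p] → ℝ) : Prop :=
  (∀ y ∈ Efund p m, HasConductor p m k (fun x => G x y)) ∧
  (∀ x ∈ Efund p m, HasConductor p m k (fun y => G x y)) ∧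
  ∀ x ∈ Efund p m, ∀ y ∈ Efund p m,
    Dop p m μ (fun z => G z y) x =
      (if ‖x / y - 1‖ ≤ (p : ℝ) ^ (-(k : ℤ)) then (p : ℝ) ^ k else 0)
        - 1 / ((m : ℝ) * (1 - 1 / (p : ℝ)))

/-- `G` is symmetric on `E × E`. -/
def IsSymmG (p m : ℕ) [Fact p.Prime] (G : ℚ_[p] → ℚ_[p] → ℝ) : Prop :=
  ∀ x ∈ Efund p m, ∀ y ∈ Efund p m, G x y = G y x

namespace GreenAux

variable (p m k : ℕ) [hp : Fact p.Prime]

lemma one_lt_pR : (1:ℝ) < p := by exact_mod_cast hp.out.one_lt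
lemma p_posR : (0:ℝ) < p := lt_trans one_pos (one_lt_pR p)

instance : NeZero (p ^ k) := ⟨pow_ne_zero k hp.out.ne_zero⟩

/-- index of cosets -/
abbrev Idx := Fin m × (ZMod (p ^ k))ˣ

def rep (a : Idx p m k) : ℚ_[p] :=
  (p : ℚ_[p]) ^ (a.1 : ℕ) * (((a.2 : ZMod (p ^ k)).val : ℕ) : ℚ_[p])

def radius (a : Idx p m k) : ℝ := (p : ℝ) ^ (-(((a.1 : ℕ) + k) : ℤ))

def inC (a : Idx p m k) (x : ℚ_[p]) : Prop := ‖x - rep p m k a‖ ≤ radius p m k a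

lemma norm_nat_unit (u : (ZMod (p ^ k))ˣ) (hk : 1 ≤ k) :
    ‖(((u : ZMod (p ^ k)).val : ℕ) : ℚ_[p])‖ = 1 := by
  have hcop := ZMod.val_coe_unit_coprime u
  have hnd : ¬ (p : ℤ) ∣ ((u : ZMod (p ^ k)).val : ℤ) := by
    intro hdvd
    have : p ∣ (u : ZMod (p ^ k)).val := by exact_mod_cast hdvd
    have : p ∣ Nat.gcd ((u : ZMod (p ^ k)).val) (p ^ k) :=
      Nat.dvd_gcd this (dvd_pow_self p (by omega))
    rw [hcop] at this
    exact hp.out.one_lt.ne' (Nat.eq_one_of_dvd_one this)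
  have hle : ‖((((u : ZMod (p ^ k)).val : ℕ) : ℤ) : ℚ_[p])‖ ≤ 1 := Padic.norm_int_le_one _
  have hlt := (Padic.norm_intCast_lt_one_iff (p := p) (k := (((u : ZMod (p ^ k)).val : ℕ) : ℤ))).not.mpr hnd
  push_cast at hle hlt ⊢
  exact le_antisymm hle (not_lt.mp hlt)

lemma norm_rep (a : Idx p m k) (hk : 1 ≤ k) :
    ‖rep p m k a‖ = (p : ℝ) ^ (-((a.1 : ℕ) : ℤ)) := by
  rw [rep, norm_mul, Padic.norm_p_pow, norm_nat_unit p k a.2 hk, mul_one]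


lemma norm_add_eq_of_lt {q r : ℚ_[p]} (h : ‖r‖ < ‖q‖) : ‖q + r‖ = ‖q‖ := by
  rw [Padic.add_eq_max_of_ne h.ne', max_eq_left h.le]

lemma radius_lt (a : Idx p m k) (hk : 1 ≤ k) :
    radius p m k a < (p : ℝ) ^ (-((a.1 : ℕ) : ℤ)) := by
  apply zpow_lt_zpow_right₀ (one_lt_pR p)
  omega

/-- L1 : on a coset, the norm is constant. -/
lemma norm_of_inC {a : Idx p m k} {x : ℚ_[p]} (h : inC p m k a x) (hk : 1 ≤ k) :
    ‖x‖ = (p : ℝ) ^ (-((a.1 : ℕ) : ℤ)) := by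
  have hlt : ‖x - rep p m k a‖ < ‖rep p m k a‖ := by
    rw [norm_rep p m k a hk]
    exact lt_of_le_of_lt h (radius_lt p m k a hk)
  have : x = rep p m k a + (x - rep p m k a) := by ring
  rw [this, norm_add_eq_of_lt p hlt, norm_rep p m k a hk]

/-- L2 : the cosets are disjoint. -/
lemma inC_unique {a b : Idx p m k} {x : ℚ_[p]} (ha : inC p m k a x)
    (hb : inC p m k b x) (hk : 1 ≤ k) : a = b := by
  -- first : same norm component
  have hnorm : (p:ℝ) ^ (-((a.1 : ℕ) : ℤ)) = (p:ℝ) ^ (-((b.1 : ℕ) : ℤ)) := by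
    rw [← norm_of_inC p m k ha hk, ← norm_of_inC p m k hb hk]
  have hfst : (a.1 : ℕ) = (b.1 : ℕ) := by
    rcases lt_trichotomy ((a.1:ℕ):ℤ) ((b.1:ℕ):ℤ) with h'|h'|h'
    · exact absurd hnorm.symm (ne_of_lt (zpow_lt_zpow_right₀ (one_lt_pR p) (by omega)))
    · exact_mod_cast h'
    · exact absurd hnorm (ne_of_lt (zpow_lt_zpow_right₀ (one_lt_pR p) (by omega)))
  -- second : the reps are close, hence the units are equal
  have hrr : ‖rep p m k a - rep p m k b‖ ≤ (p:ℝ) ^ (-(((a.1:ℕ) + k) : ℤ)) := by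
    have : rep p m k a - rep p m k b = (rep p m k a - x) + (x - rep p m k b) := by ring
    rw [this]
    refine le_trans (Padic.nonarchimedean _ _) (max_le ?_ ?_)
    · rw [show rep p m k a - x = -(x - rep p m k a) by ring, norm_neg]; exact ha
    · have : (((a.1:ℕ) + k) : ℤ) = (((b.1:ℕ) + k) : ℤ) := by rw [hfst]
      rw [this]; exact hb
  -- rep a - rep b = p^s * (val a.2 - val b.2)
  have hs : (a.1 : ℕ) = (b.1 : ℕ) := hfst
  have hval : ‖(((a.2 : ZMod (p^k)).val : ℚ_[p]) - ((b.2 : ZMod (p^k)).val : ℚ_[p]))‖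
      ≤ (p:ℝ) ^ (-(k : ℤ)) := by
    have hexp : rep p m k a - rep p m k b
        = (p:ℚ_[p]) ^ (a.1 : ℕ) * (((a.2 : ZMod (p^k)).val : ℚ_[p]) - ((b.2 : ZMod (p^k)).val : ℚ_[p])) := by
      rw [rep, rep, hs]; ring
    have := hrr
    rw [hexp, norm_mul, Padic.norm_p_pow] at this
    have hppos : (0:ℝ) < (p:ℝ) ^ (-((a.1:ℕ):ℤ)) := zpow_pos (p_posR p) _
    rw [show (-(((a.1:ℕ) + k):ℤ)) = (-((a.1:ℕ):ℤ)) + (-(k:ℤ)) by ring,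
      zpow_add₀ (p_posR p).ne'] at this
    exact le_of_mul_le_mul_left this hppos
  have hdvd : ((p:ℤ) ^ k) ∣ (((a.2 : ZMod (p^k)).val : ℤ) - ((b.2 : ZMod (p^k)).val : ℤ)) := by
    have := (Padic.norm_int_le_pow_iff_dvd (p := p)
      (((a.2 : ZMod (p^k)).val : ℤ) - ((b.2 : ZMod (p^k)).val : ℤ)) k).mp (by push_cast; exact hval)
    exact_mod_cast this
  have hu : a.2 = b.2 := by
    have hz : ((a.2 : ZMod (p^k)).val : ZMod (p^k)) = ((b.2 : ZMod (p^k)).val : ZMod (p^k)) := by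
      have := (ZMod.intCast_zmod_eq_zero_iff_dvd _ (p^k)).mpr (by exact_mod_cast hdvd)
      push_cast at this
      linear_combination this
    rw [ZMod.natCast_val, ZMod.natCast_val, ZMod.cast_id, ZMod.cast_id] at hz
    exact Units.ext hz
  exact Prod.ext (Fin.ext hfst) hu


lemma radius_eq (a : Idx p m k) :
    radius p m k a = (p:ℝ) ^ (-((a.1:ℕ):ℤ)) * (p:ℝ) ^ (-(k:ℤ)) := by
  rw [radius, ← zpow_add₀ (p_posR p).ne']
  congr 1; ring

lemma appr_norm (w : ℤ_[p]) (n : ℕ) :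
    ‖(w : ℚ_[p]) - ((w.appr n : ℕ) : ℚ_[p])‖ ≤ (p:ℝ) ^ (-(n:ℤ)) := by
  have h := PadicInt.appr_spec n w
  rw [← PadicInt.norm_le_pow_iff_mem_span_pow] at h
  have hcoe : ((w - ((w.appr n : ℕ) : ℤ_[p]) : ℤ_[p]) : ℚ_[p])
      = (w : ℚ_[p]) - ((w.appr n : ℕ) : ℚ_[p]) := by push_cast; ring
  rw [PadicInt.norm_def, hcoe] at h
  exact h

/-- L3 : every element of `Efund` lies in some coset. -/
lemma exists_inC {x : ℚ_[p]} (hx : x ∈ Efund p m) (hk : 1 ≤ k) :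
    ∃ a : Idx p m k, inC p m k a x := by
  obtain ⟨hlow, hup⟩ := hx
  have hx0 : x ≠ 0 := by
    intro h
    rw [h, norm_zero] at hlow
    exact absurd hlow (not_le.mpr (zpow_pos (p_posR p) _))
  have hval := Padic.norm_eq_zpow_neg_valuation hx0
  have hv0 : 0 ≤ x.valuation := by
    by_contra hcon
    have : (1:ℝ) < (p:ℝ) ^ (-x.valuation) :=
      one_lt_zpow₀ (one_lt_pR p) (by omega)
    rw [← hval] at this; linarith
  have hvm : x.valuation ≤ (m:ℤ) - 1 := by
    by_contra hcon
    have hlt : (p:ℝ) ^ (-x.valuation) < (p:ℝ) ^ (1 - (m:ℤ)) :=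
      zpow_lt_zpow_right₀ (one_lt_pR p) (by omega)
    rw [← hval] at hlt; linarith
  set s : ℕ := x.valuation.toNat with hs
  have hsv : (s:ℤ) = x.valuation := Int.toNat_of_nonneg hv0
  have hsm : s < m := by omega
  set y : ℚ_[p] := x / (p:ℚ_[p]) ^ s with hy
  have hps : ((p:ℚ_[p]) ^ s) ≠ 0 := pow_ne_zero _ (by exact_mod_cast hp.out.ne_zero)
  have hny : ‖y‖ = 1 := by
    rw [hy, norm_div, Padic.norm_p_pow, hval, hsv]
    field_simp
    exact div_self (zpow_ne_zero _ (p_posR p).ne')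
  have hyle : ‖y‖ ≤ 1 := hny.le
  set w : ℤ_[p] := ⟨y, hyle⟩ with hw
  set c : ℕ := w.appr k with hc
  have hclt : c < p ^ k := PadicInt.appr_lt w k
  have happrox : ‖y - (c:ℚ_[p])‖ ≤ (p:ℝ) ^ (-(k:ℤ)) := appr_norm p w k
  have hnc : ‖(c:ℚ_[p])‖ = 1 := by
    have hlt1 : ‖y - (c:ℚ_[p])‖ < ‖y‖ := by
      rw [hny]
      calc ‖y - (c:ℚ_[p])‖ ≤ (p:ℝ) ^ (-(k:ℤ)) := happrox
        _ < (p:ℝ) ^ (0:ℤ) := zpow_lt_zpow_right₀ (one_lt_pR p) (by omega)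
        _ = 1 := by norm_num
    have : (c:ℚ_[p]) = y + -(y - (c:ℚ_[p])) := by ring
    rw [this, norm_add_eq_of_lt p (by rwa [norm_neg]), hny]
  have hpc : ¬ (p:ℤ) ∣ (c:ℤ) := by
    intro hdvd
    have := (Padic.norm_intCast_lt_one_iff (p := p) (k := (c:ℤ))).mpr hdvd
    push_cast at this
    rw [hnc] at this; exact lt_irrefl _ this
  have hcop : Nat.Coprime c (p ^ k) := by
    apply Nat.Coprime.pow_right
    rw [Nat.coprime_comm]
    exact (Nat.Prime.coprime_iff_not_dvd hp.out).mpr (by exact_mod_cast hpc)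
  set u : (ZMod (p ^ k))ˣ := ZMod.unitOfCoprime c hcop with hu
  have hval_u : ((u : ZMod (p ^ k)).val : ℕ) = c := by
    rw [hu, ZMod.coe_unitOfCoprime, ZMod.val_natCast, Nat.mod_eq_of_lt hclt]
  refine ⟨(⟨s, hsm⟩, u), ?_⟩
  show ‖x - rep p m k (⟨s, hsm⟩, u)‖ ≤ radius p m k (⟨s, hsm⟩, u)
  have hxy : x = (p:ℚ_[p]) ^ s * y := by rw [hy]; field_simp
  have hrep : rep p m k (⟨s, hsm⟩, u) = (p:ℚ_[p]) ^ s * (c:ℚ_[p]) := by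
    rw [rep]; simp [hval_u]
  rw [hrep, hxy, ← mul_sub, norm_mul, Padic.norm_p_pow, radius_eq]
  exact mul_le_mul_of_nonneg_left happrox (zpow_pos (p_posR p) _).le

/-- L4 : every coset is contained in `Efund`. -/
lemma inC_mem_Efund {a : Idx p m k} {x : ℚ_[p]} (h : inC p m k a x) (hk : 1 ≤ k) :
    x ∈ Efund p m := by
  have hn := norm_of_inC p m k h hk
  constructor
  · rw [hn]
    apply zpow_le_zpow_right₀ (one_lt_pR p).le
    have := a.1.isLt; omega
  · rw [hn]
    calc (p:ℝ) ^ (-((a.1:ℕ):ℤ)) ≤ (p:ℝ) ^ (0:ℤ) :=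
          zpow_le_zpow_right₀ (one_lt_pR p).le (by omega)
      _ = 1 := by norm_num

lemma inC_self (a : Idx p m k) : inC p m k a (rep p m k a) := by
  show ‖_‖ ≤ _
  rw [sub_self, norm_zero]
  exact (zpow_pos (p_posR p) _).le

lemma rep_mem_Efund (a : Idx p m k) (hk : 1 ≤ k) : rep p m k a ∈ Efund p m :=
  inC_mem_Efund p m k (inC_self p m k a) hk

/-- L5 : cosets are stable under multiplication by `1 + p^k ℤ_p`. -/
lemma inC_mul {a : Idx p m k} {x u : ℚ_[p]} (h : inC p m k a x)
    (hu : ‖u - 1‖ ≤ (p:ℝ) ^ (-(k:ℤ))) (hk : 1 ≤ k) : inC p m k a (x * u) := by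
  show ‖_‖ ≤ _
  have hxu : x * u - rep p m k a = (x * (u - 1)) + (x - rep p m k a) := by ring
  rw [hxu]
  refine le_trans (Padic.nonarchimedean _ _) (max_le ?_ h)
  rw [norm_mul, norm_of_inC p m k h hk, radius_eq]
  exact mul_le_mul_of_nonneg_left hu (zpow_pos (p_posR p) _).le

set_option linter.unusedSectionVars false

variable [Nonempty (Fin m)]

open Classical in
def iota (x : ℚ_[p]) : Idx p m k :=
  if h : ∃ a : Idx p m k, inC p m k a x then h.choose else Classical.arbitrary _

lemma iota_spec {x : ℚ_[p]} (hx : x ∈ Efund p m) (hk : 1 ≤ k) :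
    inC p m k (iota p m k x) x := by
  rw [iota, dif_pos (exists_inC p m k hx hk)]
  exact (exists_inC p m k hx hk).choose_spec

lemma iota_eq {a : Idx p m k} {x : ℚ_[p]} (h : inC p m k a x) (hk : 1 ≤ k) :
    iota p m k x = a :=
  inC_unique p m k (iota_spec p m k (inC_mem_Efund p m k h hk) hk) h hk

lemma iota_rep (a : Idx p m k) (hk : 1 ≤ k) : iota p m k (rep p m k a) = a :=
  iota_eq p m k (inC_self p m k a) hk

lemma iota_mul {x u : ℚ_[p]} (hx : x ∈ Efund p m) (hu : ‖u - 1‖ ≤ (p:ℝ) ^ (-(k:ℤ)))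
    (hk : 1 ≤ k) : iota p m k (x * u) = iota p m k x :=
  iota_eq p m k (inC_mul p m k (iota_spec p m k hx hk) hu hk) hk

lemma rep_ne_zero (a : Idx p m k) (hk : 1 ≤ k) : rep p m k a ≠ 0 := by
  intro h
  have := norm_rep p m k a hk
  rw [h, norm_zero] at this
  exact absurd this.symm (ne_of_gt (zpow_pos (p_posR p) _))

/-- functions of conductor `k` are constant on cosets. -/
lemma conductor_const {f : ℚ_[p] → ℝ} (hf : HasConductor p m k f)
    {a : Idx p m k} {x : ℚ_[p]} (h : inC p m k a x) (hk : 1 ≤ k) :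
    f x = f (rep p m k a) := by
  have hr0 := rep_ne_zero p m k a hk
  have hxe : x = rep p m k a * (x / rep p m k a) := by field_simp
  have hu : ‖x / rep p m k a - 1‖ ≤ (p:ℝ) ^ (-(k:ℤ)) := by
    have : x / rep p m k a - 1 = (x - rep p m k a) / rep p m k a := by field_simp
    rw [this, norm_div, norm_rep p m k a hk]
    rw [div_le_iff₀ (zpow_pos (p_posR p) _)]
    calc ‖x - rep p m k a‖ ≤ radius p m k a := h
      _ = (p:ℝ) ^ (-(k:ℤ)) * (p:ℝ) ^ (-((a.1:ℕ):ℤ)) := by rw [radius_eq]; ring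
  calc f x = f (rep p m k a * (x / rep p m k a)) := by rw [← hxe]
    _ = f (rep p m k a) := hf _ (rep_mem_Efund p m k a hk) _ hu

/-- L7 : indicator bridge. -/
lemma indicator_iff {x y : ℚ_[p]} (hx : x ∈ Efund p m) (hy : y ∈ Efund p m) (hk : 1 ≤ k) :
    (‖x / y - 1‖ ≤ (p:ℝ) ^ (-(k:ℤ)) ↔ iota p m k x = iota p m k y) := by
  have hy0 : y ≠ 0 := by
    intro h
    have := hy.1
    rw [h, norm_zero] at this
    exact absurd this (not_le.mpr (zpow_pos (p_posR p) _))
  constructor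
  · intro hind
    have : inC p m k (iota p m k y) (y * (x / y)) :=
      inC_mul p m k (iota_spec p m k hy hk) hind hk
    rw [show y * (x / y) = x by field_simp] at this
    exact iota_eq p m k this hk
  · intro heq
    have hax : inC p m k (iota p m k y) x := heq ▸ iota_spec p m k hx hk
    have hay : inC p m k (iota p m k y) y := iota_spec p m k hy hk
    have hxy : ‖x - y‖ ≤ radius p m k (iota p m k y) := by
      have : x - y = (x - rep p m k (iota p m k y)) + -(y - rep p m k (iota p m k y)) := by ring
      rw [this]
      exact le_trans (Padic.nonarchimedean _ _) (max_le hax (by rwa [norm_neg]))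
    have : x / y - 1 = (x - y) / y := by field_simp
    rw [this, norm_div, norm_of_inC p m k hay hk, div_le_iff₀ (zpow_pos (p_posR p) _)]
    calc ‖x - y‖ ≤ radius p m k (iota p m k y) := hxy
      _ = (p:ℝ) ^ (-(k:ℤ)) * (p:ℝ) ^ (-(((iota p m k y).1:ℕ):ℤ)) := by rw [radius_eq]; ring


section Measure

variable [MeasurableSpace ℚ_[p]] [BorelSpace ℚ_[p]]
variable (μ : Measure ℚ_[p]) [μ.IsAddHaarMeasure]

lemma meas_closedBall_eq_zero (c : ℚ_[p]) (r : ℝ) :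
    μ (Metric.closedBall c r) = μ (Metric.closedBall 0 r) := by
  have h := measure_preimage_add μ c (Metric.closedBall c r)
  rw [← h]
  congr 1
  ext x
  simp [Metric.mem_closedBall, dist_eq_norm]

lemma ball_partition (n : ℕ) :
    Metric.closedBall (0:ℚ_[p]) ((p:ℝ) ^ (-(n:ℤ)))
      = ⋃ j : Fin p, Metric.closedBall ((j:ℚ_[p]) * (p:ℚ_[p]) ^ n) ((p:ℝ) ^ (-((n:ℤ)+1))) := by
  ext x
  simp only [Metric.mem_closedBall, dist_eq_norm, Set.mem_iUnion, sub_zero]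
  constructor
  · intro hx
    have hps : ((p:ℚ_[p]) ^ n) ≠ 0 := pow_ne_zero _ (by exact_mod_cast hp.out.ne_zero)
    set y : ℚ_[p] := x / (p:ℚ_[p]) ^ n with hy
    have hyle : ‖y‖ ≤ 1 := by
      rw [hy, norm_div, Padic.norm_p_pow, div_le_one (zpow_pos (p_posR p) _)]
      exact hx
    set w : ℤ_[p] := ⟨y, hyle⟩ with hw
    set c : ℕ := w.appr 1 with hc
    have hclt : c < p := by have := PadicInt.appr_lt w 1; simpa using this
    refine ⟨⟨c, hclt⟩, ?_⟩
    have happrox : ‖y - (c:ℚ_[p])‖ ≤ (p:ℝ) ^ (-(1:ℤ)) := by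
      have := appr_norm p w 1
      simpa using this
    have hxe : x - ((⟨c,hclt⟩ : Fin p) : ℚ_[p]) * (p:ℚ_[p]) ^ n = (p:ℚ_[p]) ^ n * (y - (c:ℚ_[p])) := by
      push_cast
      rw [hy]; field_simp
    rw [hxe, norm_mul, Padic.norm_p_pow,
      show (-((n:ℤ)+1)) = (-(n:ℤ)) + (-(1:ℤ)) by ring, zpow_add₀ (p_posR p).ne']
    exact mul_le_mul_of_nonneg_left happrox (zpow_pos (p_posR p) _).le
  · rintro ⟨j, hj⟩
    have : x = (x - (j:ℚ_[p]) * (p:ℚ_[p]) ^ n) + (j:ℚ_[p]) * (p:ℚ_[p]) ^ n := by ring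
    rw [this]
    refine le_trans (Padic.nonarchimedean _ _) (max_le ?_ ?_)
    · exact le_trans hj (zpow_le_zpow_right₀ (one_lt_pR p).le (by omega))
    · rw [norm_mul, Padic.norm_p_pow]
      have hj1 : ‖((j:ℕ):ℚ_[p])‖ ≤ 1 := by
        have := Padic.norm_int_le_one (p := p) ((j:ℕ):ℤ)
        push_cast at this ⊢
        exact this
      calc ‖((j:ℕ):ℚ_[p])‖ * (p:ℝ) ^ (-(n:ℤ)) ≤ 1 * (p:ℝ) ^ (-(n:ℤ)) :=
            mul_le_mul_of_nonneg_right hj1 (zpow_pos (p_posR p) _).le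
        _ = (p:ℝ) ^ (-(n:ℤ)) := one_mul _

lemma ball_disjoint (n : ℕ) :
    Pairwise (Function.onFun Disjoint
      (fun j : Fin p => Metric.closedBall ((j:ℚ_[p]) * (p:ℚ_[p]) ^ n) ((p:ℝ) ^ (-((n:ℤ)+1))))) := by
  intro i j hij
  rw [Function.onFun, Set.disjoint_left]
  intro x hxi hxj
  apply hij
  rw [Metric.mem_closedBall, dist_eq_norm] at hxi hxj
  have hdiff : ‖((i:ℚ_[p]) - (j:ℚ_[p])) * (p:ℚ_[p]) ^ n‖ ≤ (p:ℝ) ^ (-((n:ℤ)+1)) := by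
    have : ((i:ℚ_[p]) - (j:ℚ_[p])) * (p:ℚ_[p]) ^ n
        = -(x - (i:ℚ_[p]) * (p:ℚ_[p]) ^ n) + (x - (j:ℚ_[p]) * (p:ℚ_[p]) ^ n) := by ring
    rw [this]
    exact le_trans (Padic.nonarchimedean _ _) (max_le (by rwa [norm_neg]) hxj)
  rw [norm_mul, Padic.norm_p_pow] at hdiff
  have hd2 : ‖(i:ℚ_[p]) - (j:ℚ_[p])‖ ≤ (p:ℝ) ^ (-(1:ℤ)) := by
    have hppos : (0:ℝ) < (p:ℝ) ^ (-(n:ℤ)) := zpow_pos (p_posR p) _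
    rw [show (-((n:ℤ)+1)) = (-(n:ℤ)) + (-(1:ℤ)) by ring, zpow_add₀ (p_posR p).ne'] at hdiff
    rw [mul_comm] at hdiff
    exact le_of_mul_le_mul_left hdiff hppos
  have hdvd : ((p:ℤ)^(1:ℕ)) ∣ ((i:ℤ) - (j:ℤ)) := by
    have := (Padic.norm_int_le_pow_iff_dvd (p := p) ((i:ℤ) - (j:ℤ)) 1).mp (by push_cast; push_cast at hd2; exact hd2)
    exact this
  have hz : (i:ℤ) - (j:ℤ) = 0 := by
    apply Int.eq_zero_of_abs_lt_dvd (by simpa using hdvd)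
    have hi := i.isLt
    have hjl := j.isLt
    rw [abs_lt]
    omega
  exact Fin.ext (by omega)


lemma meas_ball_zero (hμ : μ (Metric.closedBall 0 1) = 1) (n : ℕ) :
    μ (Metric.closedBall (0:ℚ_[p]) ((p:ℝ) ^ (-(n:ℤ)))) = ENNReal.ofReal ((p:ℝ) ^ (-(n:ℤ))) := by
  induction n with
  | zero => simpa using hμ
  | succ n ih =>
    have hpart := ball_partition p n
    have hmeas : ∀ j : Fin p, MeasurableSet
        (Metric.closedBall ((j:ℚ_[p]) * (p:ℚ_[p]) ^ n) ((p:ℝ) ^ (-((n:ℤ)+1)))) :=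
      fun j => measurableSet_closedBall
    have hsum := measure_iUnion (μ := μ) (ball_disjoint p n) hmeas
    rw [← hpart, ih, tsum_fintype] at hsum
    have htrans : ∀ j : Fin p,
        μ (Metric.closedBall ((j:ℚ_[p]) * (p:ℚ_[p]) ^ n) ((p:ℝ) ^ (-((n:ℤ)+1))))
          = μ (Metric.closedBall (0:ℚ_[p]) ((p:ℝ) ^ (-((n:ℤ)+1)))) :=
      fun j => meas_closedBall_eq_zero p μ _ _
    simp only [htrans, Finset.sum_const, Finset.card_univ, Fintype.card_fin, nsmul_eq_mul] at hsum
    -- hsum : ofReal (p^(-n)) = p * μ (ball (p^(-(n+1))))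
    have hfac : ENNReal.ofReal ((p:ℝ) ^ (-(n:ℤ)))
        = (p:ENNReal) * ENNReal.ofReal ((p:ℝ) ^ (-((n:ℤ)+1))) := by
      rw [show ((p:ENNReal)) = ENNReal.ofReal ((p:ℝ)) by simp [ENNReal.ofReal_natCast],
        ← ENNReal.ofReal_mul (by positivity)]
      congr 1
      rw [show (-(n:ℤ)) = 1 + (-((n:ℤ)+1)) by ring, zpow_add₀ (p_posR p).ne', zpow_one]
    have hp0 : (p:ENNReal) ≠ 0 := by exact_mod_cast hp.out.ne_zero
    have hptop : (p:ENNReal) ≠ ⊤ := ENNReal.natCast_ne_top p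
    have hcancel := (ENNReal.mul_right_inj hp0 hptop).mp (hfac.symm.trans hsum)
    have hcast : (-(((n+1):ℕ):ℤ)) = -((n:ℤ)+1) := by push_cast; ring
    rw [hcast]
    exact hcancel.symm

lemma meas_ball (hμ : μ (Metric.closedBall 0 1) = 1) (c : ℚ_[p]) (n : ℕ) :
    μ (Metric.closedBall c ((p:ℝ) ^ (-(n:ℤ)))) = ENNReal.ofReal ((p:ℝ) ^ (-(n:ℤ))) := by
  rw [meas_closedBall_eq_zero p μ, meas_ball_zero p μ hμ]

lemma meas_ball_real (hμ : μ (Metric.closedBall 0 1) = 1) (c : ℚ_[p]) (n : ℕ) :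
    (μ (Metric.closedBall c ((p:ℝ) ^ (-(n:ℤ))))).toReal = (p:ℝ) ^ (-(n:ℤ)) := by
  rw [meas_ball p μ hμ, ENNReal.toReal_ofReal (zpow_pos (p_posR p) _).le]


end Measure

def Cset (a : Idx p m k) : Set ℚ_[p] := Metric.closedBall (rep p m k a) (radius p m k a)

lemma mem_Cset_iff (a : Idx p m k) (x : ℚ_[p]) : x ∈ Cset p m k a ↔ inC p m k a x := by
  rw [Cset, Metric.mem_closedBall, dist_eq_norm, inC]

lemma Efund_eq_biUnion (hk : 1 ≤ k) [Nonempty (Fin m)] :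
    Efund p m = ⋃ a ∈ (Finset.univ : Finset (Idx p m k)), Cset p m k a := by
  ext x
  constructor
  · intro hx
    obtain ⟨a, ha⟩ := exists_inC p m k hx hk
    exact Set.mem_biUnion (Finset.mem_coe.mpr (Finset.mem_univ a))
      ((mem_Cset_iff p m k a x).mpr ha)
  · intro hx
    obtain ⟨a, -, ha⟩ := Set.mem_iUnion₂.mp hx
    exact inC_mem_Efund p m k ((mem_Cset_iff p m k a x).mp ha) hk

lemma Cset_disjoint (hk : 1 ≤ k) :
    Set.Pairwise (↑(Finset.univ : Finset (Idx p m k)))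
      (Function.onFun Disjoint (fun a => Cset p m k a)) := by
  intro a _ b _ hab
  rw [Function.onFun, Set.disjoint_left]
  intro x hxa hxb
  rw [mem_Cset_iff] at hxa hxb
  exact hab (inC_unique p m k hxa hxb hk)

lemma dist_rep_gt {a b : Idx p m k} (hab : a ≠ b) (hk : 1 ≤ k) :
    radius p m k a < ‖rep p m k b - rep p m k a‖
      ∧ radius p m k b < ‖rep p m k b - rep p m k a‖ := by
  constructor
  · by_contra hcon
    push_neg at hcon
    have h1 : inC p m k a (rep p m k b) := by
      rw [inC]; exact hcon
    exact hab (inC_unique p m k h1 (inC_self p m k b) hk)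
  · by_contra hcon
    push_neg at hcon
    have h1 : inC p m k b (rep p m k a) := by
      rw [inC, ← norm_neg, neg_sub]; exact hcon
    exact hab (inC_unique p m k (inC_self p m k a) h1 hk)

lemma dist_in_cosets {a b : Idx p m k} (hab : a ≠ b) {x z : ℚ_[p]}
    (hx : inC p m k a x) (hz : inC p m k b z) (hk : 1 ≤ k) :
    ‖z - x‖ = ‖rep p m k b - rep p m k a‖ := by
  have hgt := dist_rep_gt p m k hab hk
  have hsplit : z - x = (rep p m k b - rep p m k a) + ((z - rep p m k b) + -(x - rep p m k a)) := by
    ring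
  rw [hsplit]
  apply norm_add_eq_of_lt p
  calc ‖(z - rep p m k b) + -(x - rep p m k a)‖
      ≤ max ‖z - rep p m k b‖ ‖-(x - rep p m k a)‖ := Padic.nonarchimedean _ _
    _ < ‖rep p m k b - rep p m k a‖ := by
        rw [norm_neg]
        exact max_lt (lt_of_le_of_lt hz hgt.2) (lt_of_le_of_lt hx hgt.1)


def Kw (a b : Idx p m k) : ℝ :=
  (p:ℝ) ^ (-((((a.1:ℕ) + (b.1:ℕ) + k : ℕ)) : ℤ)) / ‖rep p m k b - rep p m k a‖ ^ 2

open Classical in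
def K0 (a b : Idx p m k) : ℝ := if a = b then 0 else Kw p m k a b

lemma Kw_symm (a b : Idx p m k) : Kw p m k a b = Kw p m k b a := by
  rw [Kw, Kw, norm_sub_rev]
  congr 2
  push_cast; ring

lemma K0_symm (a b : Idx p m k) : K0 p m k a b = K0 p m k b a := by
  classical
  rw [K0, K0]
  by_cases h : a = b
  · simp [h]
  · rw [if_neg h, if_neg (Ne.symm h), Kw_symm]

lemma Kw_pos {a b : Idx p m k} (hab : a ≠ b) (hk : 1 ≤ k) : 0 < Kw p m k a b := by
  apply div_pos (zpow_pos (p_posR p) _)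
  have h1 := (dist_rep_gt p m k hab hk).1
  have hr : (0:ℝ) ≤ radius p m k a := (zpow_pos (p_posR p) _).le
  exact pow_pos (lt_of_le_of_lt hr h1) 2

lemma K0_nonneg (a b : Idx p m k) (hk : 1 ≤ k) : 0 ≤ K0 p m k a b := by
  classical
  rw [K0]
  by_cases h : a = b
  · simp [h]
  · rw [if_neg h]; exact (Kw_pos p m k h hk).le

lemma K0_pos {a b : Idx p m k} (hab : a ≠ b) (hk : 1 ≤ k) : 0 < K0 p m k a b := by
  classical
  rw [K0, if_neg hab]
  exact Kw_pos p m k hab hk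

section Main

variable [MeasurableSpace ℚ_[p]] [BorelSpace ℚ_[p]]
variable (μ : Measure ℚ_[p]) [μ.IsAddHaarMeasure]
variable [Nonempty (Fin m)]

/-- The key analytic lemma : on conductor-`k` functions, `Dop` is a finite sum. -/
lemma Dop_eq (hμ : μ (Metric.closedBall 0 1) = 1) (hk : 1 ≤ k)
    {f : ℚ_[p] → ℝ} (hf : HasConductor p m k f) {x : ℚ_[p]} (hx : x ∈ Efund p m) :
    Dop p m μ f x
      = ∑ b : Idx p m k, K0 p m k (iota p m k x) b
          * (f (rep p m k b) - f (rep p m k (iota p m k x))) := by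
  classical
  set a := iota p m k x with ha
  have hax : inC p m k a x := iota_spec p m k hx hk
  have hfx : f x = f (rep p m k a) := conductor_const p m k hf hax hk
  set g : ℚ_[p] → ℝ := fun z => (f z - f x) / ‖z - x‖ ^ 2 with hg
  set cval : Idx p m k → ℝ := fun b =>
    if b = a then 0
    else (f (rep p m k b) - f (rep p m k a)) / ‖rep p m k b - rep p m k a‖ ^ 2 with hcval
  have hconst : ∀ b : Idx p m k, Set.EqOn g (fun _ => cval b) (Cset p m k b) := by
    intro b z hz
    rw [mem_Cset_iff] at hz
    by_cases hba : b = a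
    · subst hba
      simp only [hcval, if_pos rfl, hg]
      show (f z - f x) / ‖z - x‖ ^ 2 = 0
      rw [conductor_const p m k hf hz hk, ← hfx, sub_self, zero_div]
    · simp only [hcval, if_neg hba, hg]
      show (f z - f x) / ‖z - x‖ ^ 2 = _
      rw [conductor_const p m k hf hz hk, hfx,
        dist_in_cosets p m k (fun h => hba h.symm) hax hz hk]
  have hfin : ∀ b : Idx p m k, μ (Cset p m k b) < ⊤ := by
    intro b
    rw [Cset, radius,
      show (-(((b.1:ℕ):ℤ) + (k:ℤ))) = -((((b.1:ℕ) + k : ℕ)) : ℤ) by push_cast; ring,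
      meas_ball p μ hμ]
    exact ENNReal.ofReal_lt_top
  have hIb : ∀ b : Idx p m k, IntegrableOn g (Cset p m k b) μ := by
    intro b
    rw [integrableOn_congr_fun (hconst b) measurableSet_closedBall]
    exact integrableOn_const (hfin b).ne
  have hint : ∫ z in Efund p m, g z ∂μ = ∑ b : Idx p m k, ∫ z in Cset p m k b, g z ∂μ := by
    rw [Efund_eq_biUnion p m k hk]
    exact integral_biUnion_finset Finset.univ (fun b _ => measurableSet_closedBall)
      (Cset_disjoint p m k hk) (fun b _ => hIb b)
  have hintb : ∀ b : Idx p m k,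
      ∫ z in Cset p m k b, g z ∂μ = (p:ℝ) ^ (-((((b.1:ℕ) + k : ℕ)) : ℤ)) * cval b := by
    intro b
    have hms : MeasurableSet (Cset p m k b) := measurableSet_closedBall
    rw [setIntegral_congr_fun hms (hconst b), setIntegral_const, smul_eq_mul, measureReal_def, Cset, radius,
      show (-(((b.1:ℕ):ℤ) + (k:ℤ))) = -((((b.1:ℕ) + k : ℕ)) : ℤ) by push_cast; ring,
      meas_ball_real p μ hμ]
  have hDop : Dop p m μ f x = ‖x‖ * ∑ b : Idx p m k,
      (p:ℝ) ^ (-((((b.1:ℕ) + k : ℕ)) : ℤ)) * cval b := by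
    rw [Dop]
    congr 1
    rw [show (∫ z in Efund p m, (f z - f x) / ‖z - x‖ ^ 2 ∂μ) = ∫ z in Efund p m, g z ∂μ from rfl,
      hint]
    exact Finset.sum_congr rfl (fun b _ => hintb b)
  rw [hDop, norm_of_inC p m k hax hk, Finset.mul_sum]
  apply Finset.sum_congr rfl
  intro b _
  by_cases hba : b = a
  · subst hba
    simp [hcval, K0]
  · rw [hcval]
    simp only [if_neg hba]
    rw [K0, if_neg (fun h => hba h.symm), Kw]
    have hexp : (-((((a.1:ℕ) + (b.1:ℕ) + k : ℕ)) : ℤ))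
        = (-((a.1:ℕ) : ℤ)) + (-((((b.1:ℕ) + k : ℕ)) : ℤ)) := by push_cast; ring
    rw [hexp, zpow_add₀ (p_posR p).ne']
    ring

end Main

section LinAlg

instance : Nonempty ((ZMod (p ^ k))ˣ) := ⟨1⟩

open Finset

def Lop (f : Idx p m k → ℝ) (a : Idx p m k) : ℝ :=
  ∑ b : Idx p m k, K0 p m k a b * (f b - f a)

/-- generic double-sum swap using the symmetry of `K0`. -/
lemma swap_gen (F : Idx p m k → Idx p m k → ℝ) :
    ∑ a : Idx p m k, ∑ b : Idx p m k, K0 p m k a b * F a b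
      = ∑ a : Idx p m k, ∑ b : Idx p m k, K0 p m k a b * F b a := by
  rw [Finset.sum_comm]
  apply Finset.sum_congr rfl; intro a _
  apply Finset.sum_congr rfl; intro b _
  rw [K0_symm]

lemma Lop_add (f g : Idx p m k → ℝ) (a : Idx p m k) :
    Lop p m k (f + g) a = Lop p m k f a + Lop p m k g a := by
  rw [Lop, Lop, Lop, ← Finset.sum_add_distrib]
  apply Finset.sum_congr rfl; intro b _
  simp only [Pi.add_apply]; ring

lemma Lop_smul (c : ℝ) (f : Idx p m k → ℝ) (a : Idx p m k) :
    Lop p m k (c • f) a = c * Lop p m k f a := by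
  rw [Lop, Lop, Finset.mul_sum]
  apply Finset.sum_congr rfl; intro b _
  simp only [Pi.smul_apply, smul_eq_mul]; ring

lemma sum_Lop (f : Idx p m k → ℝ) : ∑ a : Idx p m k, Lop p m k f a = 0 := by
  have h1 : ∑ a : Idx p m k, Lop p m k f a
      = ∑ a : Idx p m k, ∑ b : Idx p m k, K0 p m k a b * (f b - f a) := rfl
  have h2 := swap_gen p m k (fun a b => f b - f a)
  have h3 : ∑ a : Idx p m k, ∑ b : Idx p m k, K0 p m k a b * (f a - f b)
      = - ∑ a : Idx p m k, ∑ b : Idx p m k, K0 p m k a b * (f b - f a) := by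
    rw [← Finset.sum_neg_distrib]
    apply Finset.sum_congr rfl; intro a _
    rw [← Finset.sum_neg_distrib]
    apply Finset.sum_congr rfl; intro b _
    ring
  rw [h1]
  linarith [h2, h3]

lemma Lop_selfadj (f g : Idx p m k → ℝ) :
    ∑ a : Idx p m k, Lop p m k f a * g a = ∑ a : Idx p m k, f a * Lop p m k g a := by
  have e1 : ∑ a : Idx p m k, Lop p m k f a * g a
      = (∑ a : Idx p m k, ∑ b : Idx p m k, K0 p m k a b * (f b * g a))
        - (∑ a : Idx p m k, ∑ b : Idx p m k, K0 p m k a b * (f a * g a)) := by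
    rw [← Finset.sum_sub_distrib]
    apply Finset.sum_congr rfl; intro a _
    rw [Lop, Finset.sum_mul, ← Finset.sum_sub_distrib]
    apply Finset.sum_congr rfl; intro b _; ring
  have e2 : ∑ a : Idx p m k, f a * Lop p m k g a
      = (∑ a : Idx p m k, ∑ b : Idx p m k, K0 p m k a b * (f a * g b))
        - (∑ a : Idx p m k, ∑ b : Idx p m k, K0 p m k a b * (f a * g a)) := by
    rw [← Finset.sum_sub_distrib]
    apply Finset.sum_congr rfl; intro a _
    rw [Lop, Finset.mul_sum, ← Finset.sum_sub_distrib]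
    apply Finset.sum_congr rfl; intro b _; ring
  have e3 := swap_gen p m k (fun a b => f b * g a)
  have e4 : ∑ a : Idx p m k, ∑ b : Idx p m k, K0 p m k a b * (f a * g b)
      = ∑ a : Idx p m k, ∑ b : Idx p m k, K0 p m k a b * (f b * g a) := by
    rw [e3]
  rw [e1, e2, e4]

lemma Lop_zero_const (hk : 1 ≤ k) {f : Idx p m k → ℝ}
    (h : ∀ a, Lop p m k f a = 0) (a b : Idx p m k) : f a = f b := by
  classical
  have hS2 : ∑ a : Idx p m k, ∑ b : Idx p m k, K0 p m k a b * ((f b - f a) * f a) = 0 := by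
    have : ∀ a : Idx p m k, ∑ b : Idx p m k, K0 p m k a b * ((f b - f a) * f a)
        = Lop p m k f a * f a := by
      intro a; rw [Lop, Finset.sum_mul]
      apply Finset.sum_congr rfl; intro b _; ring
    rw [Finset.sum_congr rfl (fun a _ => this a)]
    simp [h]
  have hS1 : ∑ a : Idx p m k, ∑ b : Idx p m k, K0 p m k a b * ((f b - f a) * f b) = 0 := by
    rw [swap_gen p m k (fun a b => (f b - f a) * f b)]
    have : ∑ a : Idx p m k, ∑ b : Idx p m k, K0 p m k a b * ((f a - f b) * f a)
        = - ∑ a : Idx p m k, ∑ b : Idx p m k, K0 p m k a b * ((f b - f a) * f a) := by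
      rw [← Finset.sum_neg_distrib]
      apply Finset.sum_congr rfl; intro a _
      rw [← Finset.sum_neg_distrib]
      apply Finset.sum_congr rfl; intro b _
      ring
    rw [this, hS2, neg_zero]
  have hsq : ∑ a : Idx p m k, ∑ b : Idx p m k, K0 p m k a b * (f b - f a) ^ 2 = 0 := by
    have : ∀ a b : Idx p m k, K0 p m k a b * (f b - f a) ^ 2
        = K0 p m k a b * ((f b - f a) * f b) - K0 p m k a b * ((f b - f a) * f a) := by
      intro a b; ring
    calc ∑ a : Idx p m k, ∑ b : Idx p m k, K0 p m k a b * (f b - f a) ^ 2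
        = ∑ a : Idx p m k, ∑ b : Idx p m k,
            (K0 p m k a b * ((f b - f a) * f b) - K0 p m k a b * ((f b - f a) * f a)) := by
          apply Finset.sum_congr rfl; intro a _
          apply Finset.sum_congr rfl; intro b _
          apply this
      _ = (∑ a : Idx p m k, ∑ b : Idx p m k, K0 p m k a b * ((f b - f a) * f b))
            - (∑ a : Idx p m k, ∑ b : Idx p m k, K0 p m k a b * ((f b - f a) * f a)) := by
          rw [← Finset.sum_sub_distrib]
          exact Finset.sum_congr rfl (fun a _ => Finset.sum_sub_distrib _ _)
      _ = 0 := by rw [hS1, hS2, sub_zero]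
  by_cases hab : a = b
  · rw [hab]
  · have hterm : ∀ x ∈ (Finset.univ : Finset (Idx p m k)),
        0 ≤ ∑ y : Idx p m k, K0 p m k x y * (f y - f x) ^ 2 := by
      intro x _
      apply Finset.sum_nonneg
      intro y _
      exact mul_nonneg (K0_nonneg p m k x y hk) (sq_nonneg _)
    have houter := (Finset.sum_eq_zero_iff_of_nonneg hterm).mp hsq b (Finset.mem_univ b)
    have hinner : ∀ y ∈ (Finset.univ : Finset (Idx p m k)),
        0 ≤ K0 p m k b y * (f y - f b) ^ 2 := fun y _ =>
      mul_nonneg (K0_nonneg p m k b y hk) (sq_nonneg _)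
    have := (Finset.sum_eq_zero_iff_of_nonneg hinner).mp houter a (Finset.mem_univ a)
    have hK := K0_pos p m k (fun h => hab h.symm) hk
    have hsq0 : (f a - f b) ^ 2 = 0 := by
      by_contra hne
      exact hne (by nlinarith [sq_nonneg (f a - f b)])
    have := sq_eq_zero_iff.mp hsq0
    linarith [sub_eq_zero.mp this]


def NN : ℝ := (Fintype.card (Idx p m k) : ℝ)

lemma NN_pos [Nonempty (Fin m)] : 0 < NN p m k := by
  rw [NN]
  exact_mod_cast Fintype.card_pos

def Mlin : (Idx p m k → ℝ) →ₗ[ℝ] (Idx p m k → ℝ) where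
  toFun f := fun a => Lop p m k f a + (∑ b : Idx p m k, f b) / NN p m k
  map_add' f g := by
    funext a
    show Lop p m k (f + g) a + (∑ b : Idx p m k, (f + g) b) / NN p m k
        = (Lop p m k f a + (∑ b : Idx p m k, f b) / NN p m k)
          + (Lop p m k g a + (∑ b : Idx p m k, g b) / NN p m k)
    rw [Lop_add]
    simp only [Pi.add_apply]
    rw [Finset.sum_add_distrib]
    ring
  map_smul' c f := by
    funext a
    show Lop p m k (c • f) a + (∑ b : Idx p m k, (c • f) b) / NN p m k
        = c * (Lop p m k f a + (∑ b : Idx p m k, f b) / NN p m k)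
    rw [Lop_smul]
    simp only [Pi.smul_apply, smul_eq_mul]
    rw [← Finset.mul_sum]
    ring

lemma Mlin_apply (f : Idx p m k → ℝ) (a : Idx p m k) :
    Mlin p m k f a = Lop p m k f a + (∑ b : Idx p m k, f b) / NN p m k := rfl

lemma sum_Mlin [Nonempty (Fin m)] (f : Idx p m k → ℝ) :
    ∑ a : Idx p m k, Mlin p m k f a = ∑ b : Idx p m k, f b := by
  rw [Finset.sum_congr rfl (fun a _ => Mlin_apply p m k f a), Finset.sum_add_distrib, sum_Lop,
    zero_add, Finset.sum_const, Finset.card_univ]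
  rw [nsmul_eq_mul]
  rw [div_eq_mul_inv, ← mul_assoc]
  rw [show ((Fintype.card (Idx p m k) : ℝ) * (∑ b : Idx p m k, f b)) * (NN p m k)⁻¹
      = (∑ b : Idx p m k, f b) * ((NN p m k) * (NN p m k)⁻¹) by rw [NN]; ring]
  rw [mul_inv_cancel₀ (NN_pos p m k).ne', mul_one]

lemma Mlin_inj [Nonempty (Fin m)] (hk : 1 ≤ k) : Function.Injective (Mlin p m k) := by
  rw [injective_iff_map_eq_zero]
  intro f hf
  have hzero : ∀ a, Mlin p m k f a = 0 := fun a => congrFun hf a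
  have hsum : ∑ b : Idx p m k, f b = 0 := by
    have := sum_Mlin p m k f
    rw [Finset.sum_congr rfl (fun a _ => hzero a), Finset.sum_const_zero] at this
    exact this.symm
  have hL : ∀ a, Lop p m k f a = 0 := by
    intro a
    have := hzero a
    rw [Mlin_apply, hsum, zero_div, add_zero] at this
    exact this
  have hconst := Lop_zero_const p m k hk hL
  -- f is constant with zero sum, hence zero
  funext a
  have hcc : ∀ b : Idx p m k, f b = f a := fun b => hconst b a
  have : ∑ b : Idx p m k, f b = (Fintype.card (Idx p m k) : ℝ) * f a := by
    rw [Finset.sum_congr rfl (fun b _ => hcc b), Finset.sum_const, Finset.card_univ, nsmul_eq_mul]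
  rw [hsum] at this
  have hN := NN_pos p m k
  rw [NN] at hN
  have := (mul_eq_zero.mp this.symm).resolve_left hN.ne'
  exact this

lemma Mlin_bij [Nonempty (Fin m)] (hk : 1 ≤ k) : Function.Bijective (Mlin p m k) :=
  ⟨Mlin_inj p m k hk, (LinearMap.injective_iff_surjective).mp (Mlin_inj p m k hk)⟩

def Meq [Nonempty (Fin m)] (hk : 1 ≤ k) : (Idx p m k → ℝ) ≃ₗ[ℝ] (Idx p m k → ℝ) :=
  LinearEquiv.ofBijective (Mlin p m k) (Mlin_bij p m k hk)

def Minv [Nonempty (Fin m)] (hk : 1 ≤ k) (v : Idx p m k → ℝ) : Idx p m k → ℝ :=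
  (Meq p m k hk).symm v

lemma Mlin_Minv [Nonempty (Fin m)] (hk : 1 ≤ k) (v : Idx p m k → ℝ) :
    Mlin p m k (Minv p m k hk v) = v := by
  rw [Minv]
  exact (Meq p m k hk).apply_symm_apply v

lemma Mlin_selfadj (f g : Idx p m k → ℝ) :
    ∑ a : Idx p m k, Mlin p m k f a * g a = ∑ a : Idx p m k, f a * Mlin p m k g a := by
  have hL := Lop_selfadj p m k f g
  have h1 : ∑ a : Idx p m k, Mlin p m k f a * g a
      = (∑ a : Idx p m k, Lop p m k f a * g a)
        + (∑ b : Idx p m k, f b) * (∑ a : Idx p m k, g a) / NN p m k := by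
    calc ∑ a : Idx p m k, Mlin p m k f a * g a
        = ∑ a : Idx p m k, (Lop p m k f a * g a + (∑ b : Idx p m k, f b) / NN p m k * g a) := by
          apply Finset.sum_congr rfl; intro a _
          rw [Mlin_apply]; ring
      _ = (∑ a : Idx p m k, Lop p m k f a * g a)
          + ∑ a : Idx p m k, (∑ b : Idx p m k, f b) / NN p m k * g a := Finset.sum_add_distrib
      _ = _ := by rw [← Finset.mul_sum]; ring
  have h2 : ∑ a : Idx p m k, f a * Mlin p m k g a
      = (∑ a : Idx p m k, f a * Lop p m k g a)
        + (∑ b : Idx p m k, f b) * (∑ a : Idx p m k, g a) / NN p m k := by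
    calc ∑ a : Idx p m k, f a * Mlin p m k g a
        = ∑ a : Idx p m k, (f a * Lop p m k g a + f a * ((∑ b : Idx p m k, g b) / NN p m k)) := by
          apply Finset.sum_congr rfl; intro a _
          rw [Mlin_apply]; ring
      _ = (∑ a : Idx p m k, f a * Lop p m k g a)
          + ∑ a : Idx p m k, f a * ((∑ b : Idx p m k, g b) / NN p m k) := Finset.sum_add_distrib
      _ = _ := by rw [← Finset.sum_mul]; ring
  rw [h1, h2, hL]

lemma Minv_selfadj [Nonempty (Fin m)] (hk : 1 ≤ k) (u v : Idx p m k → ℝ) :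
    ∑ a : Idx p m k, Minv p m k hk u a * v a = ∑ a : Idx p m k, u a * Minv p m k hk v a := by
  have h := Mlin_selfadj p m k (Minv p m k hk u) (Minv p m k hk v)
  calc ∑ a : Idx p m k, Minv p m k hk u a * v a
      = ∑ a : Idx p m k, Minv p m k hk u a * Mlin p m k (Minv p m k hk v) a := by
        rw [Mlin_Minv]
    _ = ∑ a : Idx p m k, Mlin p m k (Minv p m k hk u) a * Minv p m k hk v a := h.symm
    _ = ∑ a : Idx p m k, u a * Minv p m k hk v a := by rw [Mlin_Minv]


def Vol : ℝ := (m : ℝ) * (1 - 1 / (p : ℝ))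

lemma Vol_pos (hm : 1 ≤ m) : 0 < Vol p m := by
  rw [Vol]
  have h1 : (1:ℝ) ≤ (m:ℝ) := by exact_mod_cast hm
  have h2 : 1 / (p:ℝ) < 1 := by
    rw [div_lt_one (p_posR p)]
    exact one_lt_pR p
  nlinarith

lemma card_Idx (hk : 1 ≤ k) :
    NN p m k = Vol p m * (p : ℝ) ^ k := by
  have hcard : Fintype.card (Idx p m k) = m * Nat.totient (p ^ k) := by
    rw [Fintype.card_prod, Fintype.card_fin, ZMod.card_units_eq_totient]
  have htot : Nat.totient (p ^ k) = p ^ (k - 1) * (p - 1) :=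
    Nat.totient_prime_pow hp.out (by omega)
  have hpk : (p:ℝ) ^ k = (p:ℝ) ^ (k - 1) * (p:ℝ) := by
    rw [← pow_succ]
    congr 1
    omega
  rw [NN, hcard, htot, Vol]
  push_cast [Nat.cast_sub (Nat.one_le_iff_ne_zero.mpr hp.out.ne_zero)]
  rw [hpk]
  have hp0 : (p:ℝ) ≠ 0 := (p_posR p).ne'
  field_simp

def rvec (b : Idx p m k) : Idx p m k → ℝ :=
  fun a => (if a = b then (p : ℝ) ^ k else 0) - 1 / Vol p m

lemma sum_rvec [Nonempty (Fin m)] (hm : 1 ≤ m) (hk : 1 ≤ k) (b : Idx p m k) :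
    ∑ a : Idx p m k, rvec p m k b a = 0 := by
  classical
  have h1 : ∑ a : Idx p m k, rvec p m k b a
      = (∑ a : Idx p m k, if a = b then (p : ℝ) ^ k else 0)
        - ∑ _a : Idx p m k, 1 / Vol p m := by
    rw [← Finset.sum_sub_distrib]
    rfl
  rw [h1, Finset.sum_ite_eq' Finset.univ b (fun _ => (p:ℝ)^k), if_pos (Finset.mem_univ b),
    Finset.sum_const, Finset.card_univ, nsmul_eq_mul]
  have : (Fintype.card (Idx p m k) : ℝ) = NN p m k := rfl
  rw [this, card_Idx p m k hk]
  have hv := (Vol_pos p m hm).ne'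
  field_simp
  simp

def gvec [Nonempty (Fin m)] (hk : 1 ≤ k) (b : Idx p m k) : Idx p m k → ℝ :=
  Minv p m k hk (rvec p m k b)

/-- `Lop (gvec b) = rvec b`. -/
lemma Lop_gvec [Nonempty (Fin m)] (hm : 1 ≤ m) (hk : 1 ≤ k) (b : Idx p m k) (a : Idx p m k) :
    Lop p m k (gvec p m k hk b) a = rvec p m k b a := by
  have hM := Mlin_Minv p m k hk (rvec p m k b)
  have hsumg : ∑ c : Idx p m k, Minv p m k hk (rvec p m k b) c = 0 := by
    have h1 := sum_Mlin p m k (Minv p m k hk (rvec p m k b))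
    rw [show Mlin p m k (Minv p m k hk (rvec p m k b)) = rvec p m k b from hM] at h1
    rw [← h1, sum_rvec p m k hm hk b]
  have := congrFun hM a
  rw [Mlin_apply, hsumg, zero_div, add_zero] at this
  exact this

/-- symmetry of `gvec`. -/
lemma gvec_symm [Nonempty (Fin m)] (hm : 1 ≤ m) (hk : 1 ≤ k) (a b : Idx p m k) :
    gvec p m k hk b a = gvec p m k hk a b := by
  classical
  -- decompose rvec b = p^k • e b - (1/Vol) • 1
  have hone : Mlin p m k (fun _ => (1:ℝ)) = fun _ => (1:ℝ) := by
    funext a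
    rw [Mlin_apply]
    have hL : Lop p m k (fun _ => (1:ℝ)) a = 0 := by
      rw [Lop]
      apply Finset.sum_eq_zero
      intro b _
      rw [sub_self, mul_zero]
    rw [hL, zero_add, Finset.sum_const, Finset.card_univ, nsmul_eq_mul, mul_one]
    rw [show (Fintype.card (Idx p m k) : ℝ) = NN p m k from rfl]
    exact div_self (NN_pos p m k).ne'
  have hMinv_one : Minv p m k hk (fun _ => (1:ℝ)) = fun _ => (1:ℝ) := by
    rw [Minv]
    apply (Meq p m k hk).symm_apply_eq.mpr
    exact hone.symm
  set e : Idx p m k → Idx p m k → ℝ := fun c a => if a = c then 1 else 0 with he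
  have hrv : ∀ c : Idx p m k, rvec p m k c
      = (p:ℝ)^k • e c + (-(1 / Vol p m)) • (fun _ => (1:ℝ)) := by
    intro c
    funext a
    simp only [Pi.add_apply, Pi.smul_apply, smul_eq_mul, he, rvec]
    by_cases hac : a = c
    · rw [if_pos hac, if_pos hac]; ring
    · rw [if_neg hac, if_neg hac]; ring
  have hMinv_lin : ∀ c : Idx p m k, Minv p m k hk (rvec p m k c)
      = (p:ℝ)^k • Minv p m k hk (e c) + (-(1 / Vol p m)) • (fun _ => (1:ℝ)) := by
    intro c
    rw [hrv c, Minv, map_add, LinearEquiv.map_smul, LinearEquiv.map_smul]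
    rw [show (Meq p m k hk).symm ((fun _ => (1:ℝ)) : Idx p m k → ℝ)
        = ((fun _ => (1:ℝ)) : Idx p m k → ℝ) from hMinv_one]
    rfl
  -- selfadjointness on basis vectors
  have hbasis : ∀ c d : Idx p m k, Minv p m k hk (e c) d = Minv p m k hk (e d) c := by
    intro c d
    have h1 : ∑ x : Idx p m k, Minv p m k hk (e c) x * e d x = Minv p m k hk (e c) d := by
      rw [Finset.sum_congr rfl (fun x _ => by rw [he])]
      simp [he]
    have h2 : ∑ x : Idx p m k, e c x * Minv p m k hk (e d) x = Minv p m k hk (e d) c := by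
      simp [he]
    rw [← h1, ← h2, Minv_selfadj p m k hk]
  have h1 := congrFun (hMinv_lin b) a
  have h2 := congrFun (hMinv_lin a) b
  rw [gvec, gvec, h1, h2]
  simp only [Pi.add_apply, Pi.smul_apply, smul_eq_mul]
  rw [hbasis b a]

end LinAlg
end GreenAux

set_option maxHeartbeats 1000000 in
open GreenAux in
/-- For every `k ≥ 1` there exists a symmetric Green's function on
the finite quotient `E_k`; moreover, any two symmetric Green's functions on `E_k`
differ by a constant. -/
theorem green_exists_unique_on_finite_quotient (p m : ℕ) [Fact p.Prime] (hm : 1 ≤ m)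
    [MeasurableSpace ℚ_[p]] [BorelSpace ℚ_[p]]
    (μ : Measure ℚ_[p]) [μ.IsAddHaarMeasure]
    (hμ : μ (Metric.closedBall 0 1) = 1)
    (k : ℕ) (hk : 1 ≤ k) :
    (∃ G : ℚ_[p] → ℚ_[p] → ℝ, IsGreen p m μ k G ∧ IsSymmG p m G) ∧
    (∀ G₁ G₂ : ℚ_[p] → ℚ_[p] → ℝ,
      IsGreen p m μ k G₁ → IsSymmG p m G₁ →
      IsGreen p m μ k G₂ → IsSymmG p m G₂ →
      ∃ c : ℝ, ∀ x ∈ Efund p m, ∀ y ∈ Efund p m, G₁ x y = G₂ x y + c) := by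
  haveI : Nonempty (Fin m) := ⟨⟨0, hm⟩⟩
  constructor
  · -- existence
    set G : ℚ_[p] → ℚ_[p] → ℝ :=
      fun x y => gvec p m k hk (iota p m k y) (iota p m k x) with hG
    have hcondx : ∀ y, HasConductor p m k (fun x => G x y) := by
      intro y x hx u hu
      show gvec p m k hk (iota p m k y) (iota p m k (x * u)) = _
      rw [iota_mul p m k hx hu hk]
    have hcondy : ∀ x, HasConductor p m k (fun y => G x y) := by
      intro x y hy u hu
      show gvec p m k hk (iota p m k (y * u)) (iota p m k x) = _
      rw [iota_mul p m k hy hu hk]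
    refine ⟨G, ⟨fun y _ => hcondx y, fun x _ => hcondy x, ?_⟩, ?_⟩
    · intro x hx y hy
      rw [Dop_eq p m k μ hμ hk (hcondx y) hx]
      have hsum : ∑ b : Idx p m k, K0 p m k (iota p m k x) b
          * (G (rep p m k b) y - G (rep p m k (iota p m k x)) y)
          = Lop p m k (gvec p m k hk (iota p m k y)) (iota p m k x) := by
        rw [Lop]
        apply Finset.sum_congr rfl
        intro b _
        rw [hG]
        simp only
        rw [iota_rep p m k b hk, iota_rep p m k (iota p m k x) hk]
      rw [hsum, Lop_gvec p m k hm hk]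
      rw [rvec]
      congr 1
      · rw [if_congr ((indicator_iff p m k hx hy hk)) rfl rfl]
    · intro x hx y hy
      show gvec p m k hk (iota p m k y) (iota p m k x)
          = gvec p m k hk (iota p m k x) (iota p m k y)
      exact gvec_symm p m k hm hk (iota p m k x) (iota p m k y)
  · -- uniqueness
    intro G₁ G₂ h1 h1s h2 h2s
    have key : ∀ y ∈ Efund p m, ∀ x ∈ Efund p m, ∀ x' ∈ Efund p m,
        G₁ x y - G₂ x y = G₁ x' y - G₂ x' y := by
      intro y hy x hx x' hx'
      set hv : Idx p m k → ℝ := fun b => G₁ (rep p m k b) y - G₂ (rep p m k b) y with hhv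
      have hLzero : ∀ a, Lop p m k hv a = 0 := by
        intro a
        have hra : rep p m k a ∈ Efund p m := rep_mem_Efund p m k a hk
        have e1 := Dop_eq p m k μ hμ hk (h1.1 y hy) hra
        have e2 := Dop_eq p m k μ hμ hk (h2.1 y hy) hra
        rw [iota_rep p m k a hk] at e1 e2
        have g1 := h1.2.2 (rep p m k a) hra y hy
        have g2 := h2.2.2 (rep p m k a) hra y hy
        have hexpand : Lop p m k hv a
            = (∑ b : Idx p m k, K0 p m k a b * (G₁ (rep p m k b) y - G₁ (rep p m k a) y))
              - (∑ b : Idx p m k, K0 p m k a b * (G₂ (rep p m k b) y - G₂ (rep p m k a) y)) := by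
          rw [Lop, ← Finset.sum_sub_distrib]
          apply Finset.sum_congr rfl
          intro b _
          rw [hhv]
          simp only
          ring
        rw [hexpand, ← e1, ← e2, g1, g2, sub_self]
      have hconst := Lop_zero_const p m k hk hLzero
      have hx1 : G₁ x y = G₁ (rep p m k (iota p m k x)) y :=
        conductor_const p m k (h1.1 y hy) (iota_spec p m k hx hk) hk
      have hx2 : G₂ x y = G₂ (rep p m k (iota p m k x)) y :=
        conductor_const p m k (h2.1 y hy) (iota_spec p m k hx hk) hk
      have hx1' : G₁ x' y = G₁ (rep p m k (iota p m k x')) y :=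
        conductor_const p m k (h1.1 y hy) (iota_spec p m k hx' hk) hk
      have hx2' : G₂ x' y = G₂ (rep p m k (iota p m k x')) y :=
        conductor_const p m k (h2.1 y hy) (iota_spec p m k hx' hk) hk
      rw [hx1, hx2, hx1', hx2']
      exact hconst (iota p m k x) (iota p m k x')
    set r0 : ℚ_[p] := rep p m k (Classical.arbitrary _) with hr0def
    have hr0 : r0 ∈ Efund p m := rep_mem_Efund p m k _ hk
    refine ⟨G₁ r0 r0 - G₂ r0 r0, ?_⟩
    intro x hx y hy
    have s1 : G₁ x y - G₂ x y = G₁ r0 y - G₂ r0 y := key y hy x hx r0 hr0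
    have s2 : G₁ r0 y - G₂ r0 y = G₁ y r0 - G₂ y r0 := by
      rw [h1s r0 hr0 y hy, h2s r0 hr0 y hy]
    have s3 : G₁ y r0 - G₂ y r0 = G₁ r0 r0 - G₂ r0 r0 := key r0 hr0 y hy r0 hr0
    linarith
end
end

section
/- For fixed y ∈ E, a symmetric Green's function depends on x − y only up to its leading (m − v_p(y)) p-adic digits: if k ≥ 1, G is a symmetric Green's function on E_k, y ∈ E, u ∈ 1 + p^{m − v_p(y)} ℤ_p, and x ∈ E, then x' := y + u(x − y) lies in E and G(x', y) = G(x, y). -/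
open MeasureTheory

noncomputable section

namespace GreenDigitAux

variable {p m k : ℕ} [Fact p.Prime]

lemma one_lt_p : (1 : ℝ) < p := by
  exact_mod_cast (Fact.out : p.Prime).one_lt

lemma p_pos : (0 : ℝ) < p := lt_trans one_pos one_lt_p

lemma mem_norm_pos {x : ℚ_[p]} (hx : x ∈ Efund p m) : 0 < ‖x‖ :=
  lt_of_lt_of_le (zpow_pos p_pos _) hx.1

lemma mem_ne_zero {x : ℚ_[p]} (hx : x ∈ Efund p m) : x ≠ 0 :=
  norm_pos_iff.mp (mem_norm_pos hx)

lemma mem_of_norm_eq {x w : ℚ_[p]} (hx : x ∈ Efund p m) (h : ‖w‖ = ‖x‖) :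
    w ∈ Efund p m :=
  ⟨by rw [h]; exact hx.1, by rw [h]; exact hx.2⟩

lemma norm_add_eq_left {a b : ℚ_[p]} (h : ‖b‖ < ‖a‖) : ‖a + b‖ = ‖a‖ := by
  rw [Padic.add_eq_max_of_ne (ne_of_gt h), max_eq_left h.le]

lemma norm_sub_le_max (a b : ℚ_[p]) : ‖a - b‖ ≤ max ‖a‖ ‖b‖ := by
  have := Padic.nonarchimedean a (-b)
  simpa [sub_eq_add_neg] using this

/-- The quantitative hypothesis on `u`, in product form. -/
lemma norm_u_sub_one_lt {y u : ℚ_[p]} (hy : y ∈ Efund p m)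
    (hu : ‖u - 1‖ * ‖y‖ ≤ (p : ℝ) ^ (-(m : ℤ))) : ‖u - 1‖ < 1 := by
  have h2 : ‖u - 1‖ * (p : ℝ) ^ (1 - (m : ℤ)) ≤ (p : ℝ) ^ (-(m : ℤ)) :=
    le_trans (mul_le_mul_of_nonneg_left hy.1 (norm_nonneg _)) hu
  have h3 : ‖u - 1‖ ≤ (p : ℝ) ^ (-(m : ℤ)) / (p : ℝ) ^ (1 - (m : ℤ)) :=
    (le_div_iff₀ (zpow_pos p_pos _)).mpr h2
  have h4 : (p : ℝ) ^ (-(m : ℤ)) / (p : ℝ) ^ (1 - (m : ℤ)) = (p : ℝ) ^ (-1 : ℤ) := by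
    rw [← zpow_sub₀ (ne_of_gt p_pos)]
    congr 1
    ring
  have h5 : (p : ℝ) ^ (-1 : ℤ) < (p : ℝ) ^ (0 : ℤ) :=
    zpow_lt_zpow_right₀ one_lt_p (by omega)
  have := lt_of_le_of_lt (h4 ▸ h3) h5
  simpa using this

lemma key_lt {y u x : ℚ_[p]} (hy : y ∈ Efund p m)
    (hu : ‖u - 1‖ * ‖y‖ ≤ (p : ℝ) ^ (-(m : ℤ))) (hx : x ∈ Efund p m) :
    ‖(u - 1) * (x - y)‖ < ‖x‖ := by
  have h1 : ‖x - y‖ ≤ max ‖x‖ ‖y‖ := norm_sub_le_max x y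
  rw [norm_mul]
  rcases max_cases ‖x‖ ‖y‖ with ⟨hmx, _⟩ | ⟨hmx, _⟩
  · -- max = ‖x‖
    have hle : ‖u - 1‖ * ‖x - y‖ ≤ ‖u - 1‖ * ‖x‖ :=
      mul_le_mul_of_nonneg_left (h1.trans hmx.le) (norm_nonneg _)
    exact lt_of_le_of_lt hle (mul_lt_of_lt_one_left (mem_norm_pos hx)
      (norm_u_sub_one_lt hy hu))
  · -- max = ‖y‖
    have hle : ‖u - 1‖ * ‖x - y‖ ≤ ‖u - 1‖ * ‖y‖ :=
      mul_le_mul_of_nonneg_left (h1.trans hmx.le) (norm_nonneg _)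
    have h6 : (p : ℝ) ^ (-(m : ℤ)) < (p : ℝ) ^ (1 - (m : ℤ)) :=
      zpow_lt_zpow_right₀ one_lt_p (by omega)
    exact lt_of_le_of_lt (hle.trans hu) (lt_of_lt_of_le h6 hx.1)

lemma sigma_norm {y u : ℚ_[p]} (hy : y ∈ Efund p m)
    (hu : ‖u - 1‖ * ‖y‖ ≤ (p : ℝ) ^ (-(m : ℤ))) {z : ℚ_[p]} (hz : z ∈ Efund p m) :
    ‖y + u * (z - y)‖ = ‖z‖ := by
  have h : y + u * (z - y) = z + (u - 1) * (z - y) := by ring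
  rw [h, norm_add_eq_left (key_lt hy hu hz)]

lemma sigma_mem {y u : ℚ_[p]} (hy : y ∈ Efund p m)
    (hu : ‖u - 1‖ * ‖y‖ ≤ (p : ℝ) ^ (-(m : ℤ))) {z : ℚ_[p]} (hz : z ∈ Efund p m) :
    y + u * (z - y) ∈ Efund p m :=
  mem_of_norm_eq hz (sigma_norm hy hu hz)

lemma norm_u_eq_one {y u : ℚ_[p]} (hy : y ∈ Efund p m)
    (hu : ‖u - 1‖ * ‖y‖ ≤ (p : ℝ) ^ (-(m : ℤ))) : ‖u‖ = 1 := by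
  have h1 : ‖u - 1‖ < ‖(1 : ℚ_[p])‖ := by
    simpa using norm_u_sub_one_lt hy hu
  have := norm_add_eq_left h1
  simpa using this

lemma dual_hu {y u : ℚ_[p]} (hy : y ∈ Efund p m)
    (hu : ‖u - 1‖ * ‖y‖ ≤ (p : ℝ) ^ (-(m : ℤ))) :
    ‖u⁻¹ - 1‖ * ‖y‖ ≤ (p : ℝ) ^ (-(m : ℤ)) := by
  have hu1 : ‖u‖ = 1 := norm_u_eq_one hy hu
  have hu0 : u ≠ 0 := by
    intro h; rw [h] at hu1; simp at hu1
  have h : u⁻¹ - 1 = -(u - 1) * u⁻¹ := by field_simp; ring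
  rw [h, norm_mul, norm_neg, norm_inv, hu1, inv_one, mul_one]
  exact hu

lemma cond_const {f : ℚ_[p] → ℝ} (hf : HasConductor p m k f) {z w : ℚ_[p]}
    (hz : z ∈ Efund p m) (hw : ‖w - z‖ ≤ (p : ℝ) ^ (-(k : ℤ)) * ‖z‖) :
    f w = f z := by
  have hz0 : z ≠ 0 := mem_ne_zero hz
  have hzn : (0 : ℝ) < ‖z‖ := mem_norm_pos hz
  have h1 : ‖w / z - 1‖ ≤ (p : ℝ) ^ (-(k : ℤ)) := by
    have h2 : w / z - 1 = (w - z) / z := div_sub_one hz0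
    rw [h2, norm_div]
    exact (div_le_iff₀ hzn).mpr hw
  have h3 := hf z hz (w / z) h1
  have h4 : z * (w / z) = w := by field_simp
  rwa [h4] at h3

lemma isClosed_Efund : IsClosed (Efund p m) := by
  have h : Efund p m = (fun x : ℚ_[p] => ‖x‖) ⁻¹' Set.Icc ((p : ℝ) ^ (1 - (m : ℤ))) 1 := rfl
  rw [h]
  exact isClosed_Icc.preimage continuous_norm

lemma isCompact_Efund : IsCompact (Efund p m) :=
  (isCompact_closedBall (0 : ℚ_[p]) 1).of_isClosed_subset isClosed_Efund
    (fun x hx => by simpa [Metric.mem_closedBall, dist_zero_right] using hx.2)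

lemma ball_norm_eq (hk : 1 ≤ k) {z w : ℚ_[p]} (hz : z ∈ Efund p m)
    (hw : ‖w - z‖ ≤ (p : ℝ) ^ (-(k : ℤ)) * ‖z‖) : ‖w‖ = ‖z‖ := by
  have hpk : (p : ℝ) ^ (-(k : ℤ)) < 1 := by
    have := zpow_lt_zpow_right₀ (one_lt_p (p := p)) (show -(k : ℤ) < 0 by omega)
    simpa using this
  have hlt : ‖w - z‖ < ‖z‖ :=
    lt_of_le_of_lt hw (by
      have := mul_lt_mul_of_pos_right hpk (mem_norm_pos hz)
      simpa using this)
  have h : w = z + (w - z) := by ring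
  rw [h, norm_add_eq_left hlt]

lemma ball_mem_Efund (hk : 1 ≤ k) {z w : ℚ_[p]} (hz : z ∈ Efund p m)
    (hw : ‖w - z‖ ≤ (p : ℝ) ^ (-(k : ℤ)) * ‖z‖) : w ∈ Efund p m :=
  mem_of_norm_eq hz (ball_norm_eq hk hz hw)

lemma cond_continuousOn (hk : 1 ≤ k) {f : ℚ_[p] → ℝ} (hf : HasConductor p m k f) :
    ContinuousOn f (Efund p m) := by
  intro z hz
  have hr : 0 < (p : ℝ) ^ (-(k : ℤ)) * ‖z‖ := mul_pos (zpow_pos p_pos _) (mem_norm_pos hz)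
  have hev : f =ᶠ[nhds z] fun _ => f z := by
    filter_upwards [Metric.closedBall_mem_nhds z hr] with w hw
    exact cond_const hf hz (by rwa [Metric.mem_closedBall, dist_eq_norm] at hw)
  exact hev.continuousAt.continuousWithinAt

lemma integrand_continuousOn (hk : 1 ≤ k) {f : ℚ_[p] → ℝ} (hf : HasConductor p m k f)
    {x : ℚ_[p]} (hx : x ∈ Efund p m) :
    ContinuousOn (fun z => (f z - f x) / ‖z - x‖ ^ 2) (Efund p m) := by
  intro z₀ hz₀
  have hr : 0 < (p : ℝ) ^ (-(k : ℤ)) * ‖x‖ := mul_pos (zpow_pos p_pos _) (mem_norm_pos hx)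
  by_cases hc : ‖z₀ - x‖ ≤ (p : ℝ) ^ (-(k : ℤ)) * ‖x‖
  · have hev : (fun z => (f z - f x) / ‖z - x‖ ^ 2) =ᶠ[nhds z₀] fun _ => (0 : ℝ) := by
      filter_upwards [Metric.closedBall_mem_nhds z₀ hr] with w hw
      have hwz : ‖w - z₀‖ ≤ (p : ℝ) ^ (-(k : ℤ)) * ‖x‖ := by
        rwa [Metric.mem_closedBall, dist_eq_norm] at hw
      have hwx : ‖w - x‖ ≤ (p : ℝ) ^ (-(k : ℤ)) * ‖x‖ := by
        have h : w - x = (w - z₀) + (z₀ - x) := by ring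
        rw [h]
        exact le_trans (Padic.nonarchimedean _ _) (max_le hwz hc)
      simp [cond_const hf hx hwx]
    exact hev.continuousAt.continuousWithinAt
  · have hz₀x : ‖z₀ - x‖ ≠ 0 := (lt_of_lt_of_le hr (le_of_not_ge hc)).ne'
    refine ContinuousWithinAt.div ?_ ?_ (pow_ne_zero 2 hz₀x)
    · exact ((cond_continuousOn hk hf) z₀ hz₀).sub continuousWithinAt_const
    · exact (((continuous_id.sub continuous_const).norm.pow 2)).continuousWithinAt

lemma integrand_integrableOn [MeasurableSpace ℚ_[p]] [BorelSpace ℚ_[p]]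
    (μ : Measure ℚ_[p]) [μ.IsAddHaarMeasure] (hk : 1 ≤ k) {f : ℚ_[p] → ℝ}
    (hf : HasConductor p m k f) {x : ℚ_[p]} (hx : x ∈ Efund p m) :
    IntegrableOn (fun z => (f z - f x) / ‖z - x‖ ^ 2) (Efund p m) μ :=
  (integrand_continuousOn hk hf hx).integrableOn_compact isCompact_Efund

lemma secondCountable_padic : SecondCountableTopology ℚ_[p] := by
  have hd : DenseRange ((↑) : ℚ → ℚ_[p]) := by
    rw [Metric.denseRange_iff]
    intro x ε hε
    obtain ⟨r, hr⟩ := Padic.rat_dense p x hε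
    exact ⟨r, by rwa [dist_eq_norm]⟩
  have : TopologicalSpace.SeparableSpace ℚ_[p] :=
    ⟨⟨Set.range ((↑) : ℚ → ℚ_[p]), Set.countable_range _, hd⟩⟩
  exact UniformSpace.secondCountable_of_separable _

lemma map_unit_mul [MeasurableSpace ℚ_[p]] [BorelSpace ℚ_[p]] (μ : Measure ℚ_[p])
    [μ.IsAddHaarMeasure] (hμ : μ (Metric.closedBall 0 1) = 1) {u : ℚ_[p]}
    (hu1 : ‖u‖ = 1) : Measure.map (fun z => u * z) μ = μ := by
  have := secondCountable_padic (p := p)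
  have hu0 : u ≠ 0 := by intro h; rw [h] at hu1; simp at hu1
  let e : ℚ_[p] ≃+ ℚ_[p] := { Equiv.mulLeft₀ u hu0 with map_add' := mul_add u }
  have hecoe : ⇑e = fun z => u * z := rfl
  have hesymm : ⇑e.symm = fun z => u⁻¹ * z := rfl
  have hce : Continuous e := by rw [hecoe]; exact continuous_const.mul continuous_id
  have hces : Continuous e.symm := by rw [hesymm]; exact continuous_const.mul continuous_id
  have hmap : (Measure.map (⇑e) μ).IsAddHaarMeasure := e.isAddHaarMeasure_map μ hce hces
  have huniq := Measure.isAddLeftInvariant_eq_smul (Measure.map (⇑e) μ) μ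
  have hpre : ⇑e ⁻¹' Metric.closedBall 0 1 = Metric.closedBall 0 1 := by
    ext z
    simp only [hecoe, Set.mem_preimage, Metric.mem_closedBall, dist_zero_right]
    rw [norm_mul, hu1, one_mul]
  have hball : Measure.map (⇑e) μ (Metric.closedBall 0 1) = 1 := by
    rw [Measure.map_apply hce.measurable measurableSet_closedBall, hpre, hμ]
  have hc : ((Measure.map (⇑e) μ).addHaarScalarFactor μ : ENNReal) = 1 := by
    have h := congrArg (fun ν : Measure ℚ_[p] => ν (Metric.closedBall 0 1)) huniq
    simp only [Measure.smul_apply, smul_eq_mul, ENNReal.smul_def] at h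
    rw [hball, hμ, mul_one] at h
    exact h.symm
  have hc' : (Measure.map (⇑e) μ).addHaarScalarFactor μ = 1 :=
    ENNReal.coe_eq_one.mp hc
  calc Measure.map (fun z => u * z) μ = Measure.map (⇑e) μ := by rw [hecoe]
    _ = μ := by rw [huniq, hc', one_smul]

lemma mp_sigma [MeasurableSpace ℚ_[p]] [BorelSpace ℚ_[p]] (μ : Measure ℚ_[p])
    [μ.IsAddHaarMeasure] (hμ : μ (Metric.closedBall 0 1) = 1) {u : ℚ_[p]}
    (hu1 : ‖u‖ = 1) (y : ℚ_[p]) :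
    MeasurePreserving (fun z : ℚ_[p] => y + u * (z - y)) μ μ := by
  have h1 : MeasurePreserving (fun z : ℚ_[p] => u * z) μ μ :=
    ⟨(continuous_const.mul continuous_id).measurable, map_unit_mul μ hμ hu1⟩
  have h2 := (measurePreserving_add_left μ (y - u * y)).comp h1
  have h3 : (fun z : ℚ_[p] => y + u * (z - y)) =
      (fun w : ℚ_[p] => (y - u * y) + w) ∘ (fun z : ℚ_[p] => u * z) := by
    funext z
    simp only [Function.comp_apply]
    ring
  rw [h3]
  exact h2

lemma me_sigma [MeasurableSpace ℚ_[p]] [BorelSpace ℚ_[p]] {u : ℚ_[p]} (hu0 : u ≠ 0)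
    (y : ℚ_[p]) : MeasurableEmbedding (fun z : ℚ_[p] => y + u * (z - y)) := by
  have h := ((Homeomorph.mulLeft₀ u hu0).trans
    (Homeomorph.addLeft (y - u * y))).measurableEmbedding
  have h3 : (fun z : ℚ_[p] => y + u * (z - y)) =
      ⇑((Homeomorph.mulLeft₀ u hu0).trans (Homeomorph.addLeft (y - u * y))) := by
    funext z
    simp only [Homeomorph.trans_apply, Homeomorph.coe_mulLeft₀, Homeomorph.coe_addLeft]
    ring
  rw [h3]
  exact h

end GreenDigitAux

open GreenDigitAux in
/-- For fixed `y ∈ E`, a symmetric Green's function depends on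
`x − y` only up to its leading `m − v_p(y)` `p`-adic digits: if
`u ∈ 1 + p^{m − v_p(y)} ℤ_p` and `x ∈ E`, then `x' := y + u(x − y)` lies in `E` and
`G(x', y) = G(x, y)`. -/
theorem green_digit_dependence (p m : ℕ) [Fact p.Prime] (hm : 1 ≤ m)
    [MeasurableSpace ℚ_[p]] [BorelSpace ℚ_[p]]
    (μ : Measure ℚ_[p]) [μ.IsAddHaarMeasure]
    (hμ : μ (Metric.closedBall 0 1) = 1)
    (k : ℕ) (hk : 1 ≤ k) (G : ℚ_[p] → ℚ_[p] → ℝ)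
    (hG : IsGreen p m μ k G) (hGs : IsSymmG p m G)
    (y : ℚ_[p]) (hy : y ∈ Efund p m)
    (u : ℚ_[p]) (hu : ‖u - 1‖ ≤ (p : ℝ) ^ (-((m : ℤ) - y.valuation)))
    (x : ℚ_[p]) (hx : x ∈ Efund p m) :
    y + u * (x - y) ∈ Efund p m ∧ G (y + u * (x - y)) y = G x y := by
  classical
  have hy0 : y ≠ 0 := mem_ne_zero hy
  -- normalize the hypothesis on `u`
  have hu' : ‖u - 1‖ * ‖y‖ ≤ (p : ℝ) ^ (-(m : ℤ)) := by
    have hyval : ‖y‖ = (p : ℝ) ^ (-y.valuation) := Padic.norm_eq_zpow_neg_valuation hy0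
    calc ‖u - 1‖ * ‖y‖
        ≤ (p : ℝ) ^ (-((m : ℤ) - y.valuation)) * (p : ℝ) ^ (-y.valuation) :=
          mul_le_mul hu (le_of_eq hyval) (norm_nonneg _) (zpow_nonneg p_pos.le _)
      _ = (p : ℝ) ^ (-(m : ℤ)) := by
          rw [← zpow_add₀ (ne_of_gt (p_pos (p := p)))]
          congr 1
          ring
  have hu1 : ‖u‖ = 1 := norm_u_eq_one hy hu'
  have hu0 : u ≠ 0 := by intro h; rw [h] at hu1; simp at hu1
  set σ : ℚ_[p] → ℚ_[p] := fun z => y + u * (z - y) with hσ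
  have hσmem : ∀ z ∈ Efund p m, σ z ∈ Efund p m := fun z hz => sigma_mem hy hu' hz
  have hσnorm : ∀ z ∈ Efund p m, ‖σ z‖ = ‖z‖ := fun z hz => sigma_norm hy hu' hz
  refine ⟨hσmem x hx, ?_⟩
  have hdual : ‖u⁻¹ - 1‖ * ‖y‖ ≤ (p : ℝ) ^ (-(m : ℤ)) := dual_hu hy hu'
  have hpreE : σ ⁻¹' (Efund p m) = Efund p m := by
    ext z
    constructor
    · intro hz
      have h1 : y + u⁻¹ * (σ z - y) = z := by
        simp only [hσ, add_sub_cancel_left]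
        rw [inv_mul_cancel_left₀ hu0]
        ring
      have h2 := sigma_mem hy hdual (z := σ z) hz
      rwa [h1] at h2
    · exact fun hz => hσmem z hz
  set A : ℚ_[p] → ℝ := fun z => G (σ z) y with hA
  set B : ℚ_[p] → ℝ := fun z => G z y with hB
  have hBcond : HasConductor p m k B := hG.1 y hy
  have hAcond : HasConductor p m k A := by
    intro z hz v hv
    have hσz := hσmem z hz
    have hσz0 : σ z ≠ 0 := mem_ne_zero hσz
    have hz0 : z ≠ 0 := mem_ne_zero hz
    have hdiff : σ (z * v) - σ z = u * z * (v - 1) := by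
      simp only [hσ]; ring
    have hw : σ z * (σ (z * v) / σ z) = σ (z * v) := by field_simp
    have hnw : ‖σ (z * v) / σ z - 1‖ ≤ (p : ℝ) ^ (-(k : ℤ)) := by
      have h2 : σ (z * v) / σ z - 1 = (σ (z * v) - σ z) / σ z := div_sub_one hσz0
      rw [h2, hdiff, norm_div, norm_mul, norm_mul, hu1, one_mul, hσnorm z hz,
        mul_comm, mul_div_assoc, div_self (mem_norm_pos hz).ne', mul_one]
      exact hv
    have h3 := hG.1 y hy (σ z) hσz (σ (z * v) / σ z) hnw
    rw [hw] at h3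
    exact h3
  have hmp : MeasurePreserving σ μ μ := mp_sigma μ hμ hu1 y
  have hemb : MeasurableEmbedding σ := me_sigma hu0 y
  have hDop : ∀ z ∈ Efund p m, Dop p m μ A z = Dop p m μ B z := by
    intro z hz
    have hσz := hσmem z hz
    have hcv := hmp.setIntegral_preimage_emb hemb
      (fun w => (G w y - G (σ z) y) / ‖w - σ z‖ ^ 2) (Efund p m)
    have hintg : ∀ t : ℚ_[p],
        (A t - A z) / ‖t - z‖ ^ 2 = (G (σ t) y - G (σ z) y) / ‖σ t - σ z‖ ^ 2 := by
      intro t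
      have h3 : σ t - σ z = u * (t - z) := by simp only [hσ]; ring
      rw [h3, norm_mul, hu1, one_mul]
    have e1 : ∫ t in Efund p m, (A t - A z) / ‖t - z‖ ^ 2 ∂μ
        = ∫ w in Efund p m, (G w y - G (σ z) y) / ‖w - σ z‖ ^ 2 ∂μ := by
      rw [← hcv, hpreE]
      exact integral_congr_ae (Filter.Eventually.of_forall fun t => hintg t)
    have e3 : Dop p m μ A z = Dop p m μ B (σ z) := by
      simp only [Dop]
      rw [hσnorm z hz, e1]
    have g1 := hG.2.2 (σ z) hσz y hy
    have g2 := hG.2.2 z hz y hy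
    have hratio : ‖σ z / y - 1‖ = ‖z / y - 1‖ := by
      rw [div_sub_one hy0, div_sub_one hy0]
      have h5 : σ z - y = u * (z - y) := by simp only [hσ]; ring
      rw [h5, mul_div_assoc, norm_mul, hu1, one_mul]
    rw [e3]
    rw [show (fun w => G w y) = B from rfl] at g1 g2
    rw [g1, hratio, ← g2]
  have hIntA : ∀ z ∈ Efund p m,
      IntegrableOn (fun t => (A t - A z) / ‖t - z‖ ^ 2) (Efund p m) μ :=
    fun z hz => integrand_integrableOn μ hk hAcond hz
  have hIntB : ∀ z ∈ Efund p m,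
      IntegrableOn (fun t => (B t - B z) / ‖t - z‖ ^ 2) (Efund p m) μ :=
    fun z hz => integrand_integrableOn μ hk hBcond hz
  set H : ℚ_[p] → ℝ := fun z => A z - B z with hH
  have hHcont : ContinuousOn H (Efund p m) :=
    (cond_continuousOn hk hAcond).sub (cond_continuousOn hk hBcond)
  obtain ⟨x₀, hx₀E, hx₀max⟩ := isCompact_Efund.exists_isMaxOn ⟨y, hy⟩ hHcont
  have hEmeas : MeasurableSet (Efund p m) := isClosed_Efund.measurableSet
  have hIA := hIntA x₀ hx₀E
  have hIB := hIntB x₀ hx₀E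
  have hx₀n : ‖x₀‖ ≠ 0 := (mem_norm_pos hx₀E).ne'
  have hIeq : ∫ t in Efund p m, (A t - A x₀) / ‖t - x₀‖ ^ 2 ∂μ
      = ∫ t in Efund p m, (B t - B x₀) / ‖t - x₀‖ ^ 2 ∂μ := by
    have h := hDop x₀ hx₀E
    simp only [Dop] at h
    exact mul_left_cancel₀ hx₀n h
  set F : ℚ_[p] → ℝ :=
    fun w => (B w - B x₀) / ‖w - x₀‖ ^ 2 - (A w - A x₀) / ‖w - x₀‖ ^ 2 with hF
  have hFint : IntegrableOn F (Efund p m) μ := hIB.sub hIA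
  have hF0 : ∫ w in Efund p m, F w ∂μ = 0 := by
    simp only [hF]
    rw [integral_sub hIB hIA, hIeq, sub_self]
  have hFval : ∀ w : ℚ_[p], F w = (H x₀ - H w) / ‖w - x₀‖ ^ 2 := by
    intro w
    simp only [hF, hH]
    rw [div_sub_div_same]
    congr 1
    ring
  have hFnonneg : 0 ≤ᵐ[μ.restrict (Efund p m)] F := by
    rw [Filter.EventuallyLE]
    rw [ae_restrict_iff' hEmeas]
    refine Filter.Eventually.of_forall fun w hw => ?_
    rw [hFval w]
    exact div_nonneg (sub_nonneg.mpr (hx₀max hw)) (pow_nonneg (norm_nonneg _) 2)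
  have hFae : F =ᵐ[μ.restrict (Efund p m)] 0 :=
    (integral_eq_zero_iff_of_nonneg_ae hFnonneg hFint).mp hF0
  have hFae' : ∀ᵐ w ∂μ, w ∈ Efund p m → F w = 0 := by
    rw [← ae_restrict_iff' hEmeas]
    exact hFae
  have hconst : ∀ z ∈ Efund p m, H z = H x₀ := by
    intro z hz
    have hrpos : 0 < (p : ℝ) ^ (-(k : ℤ)) * ‖z‖ :=
      mul_pos (zpow_pos p_pos _) (mem_norm_pos hz)
    have hHloc : ∀ w : ℚ_[p], ‖w - z‖ ≤ (p : ℝ) ^ (-(k : ℤ)) * ‖z‖ → H w = H z := by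
      intro w hw
      simp only [hH, cond_const hAcond hz hw, cond_const hBcond hz hw]
    by_cases hcase : ‖x₀ - z‖ ≤ (p : ℝ) ^ (-(k : ℤ)) * ‖z‖
    · exact (hHloc x₀ hcase).symm
    · have hbpos : 0 < μ (Metric.ball z ((p : ℝ) ^ (-(k : ℤ)) * ‖z‖)) :=
        Metric.measure_ball_pos μ z hrpos
      obtain ⟨w, hwS, hwP⟩ :
          ∃ w ∈ Metric.ball z ((p : ℝ) ^ (-(k : ℤ)) * ‖z‖),
            (w ∈ Efund p m → F w = 0) := by
        by_contra hcon
        have hsub : Metric.ball z ((p : ℝ) ^ (-(k : ℤ)) * ‖z‖)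
            ⊆ {w | ¬ (w ∈ Efund p m → F w = 0)} := fun w hw hP => hcon ⟨w, hw, hP⟩
        exact absurd (measure_mono_null hsub (ae_iff.mp hFae')) hbpos.ne'
      have hwz : ‖w - z‖ ≤ (p : ℝ) ^ (-(k : ℤ)) * ‖z‖ := by
        rw [Metric.mem_ball, dist_eq_norm] at hwS
        exact hwS.le
      have hwE : w ∈ Efund p m := ball_mem_Efund hk hz hwz
      have hwx₀ : w ≠ x₀ := by
        rintro rfl
        exact hcase hwz
      have hFw : F w = 0 := hwP hwE
      have hdenom : ‖w - x₀‖ ^ 2 ≠ 0 :=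
        pow_ne_zero 2 (norm_ne_zero_iff.mpr (sub_ne_zero.mpr hwx₀))
      have hHw : H w = H x₀ := by
        rw [hFval w] at hFw
        rcases div_eq_zero_iff.mp hFw with h | h
        · exact (sub_eq_zero.mp h).symm
        · exact absurd h hdenom
      rw [← hHloc w hwz, hHw]
  have hσy : σ y = y := by simp [hσ]
  have hHy : H y = 0 := by simp only [hH, hA, hB, hσy, sub_self]
  have hHx₀ : H x₀ = 0 := by
    have h := hconst y hy
    rw [hHy] at h
    exact h.symm
  have hHx : H x = 0 := by rw [hconst x hx, hHx₀]
  exact sub_eq_zero.mp hHx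
end
end

section
/- A symmetric solution of a linear matrix equation with centrosymmetric data is centrosymmetric: let n ≥ 1 and let A, B ∈ M_n(ℝ) be centrosymmetric matrices with rank(A) ≥ n − 1. If Z ∈ M_n(ℝ) is symmetric and satisfies AZ = B, then Z is centrosymmetric, i.e. JZJ = Z. -/
/-- The `n × n` exchange matrix `J`, with `J i j = 1` iff `i + j = n - 1`
(0-based indexing, corresponding to `i + j = n + 1` in 1-based indexing). -/
def exchMatrix (n : ℕ) : Matrix (Fin n) (Fin n) ℝ :=
  Matrix.of fun i j => if (i : ℕ) + (j : ℕ) = n - 1 then 1 else 0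

lemma exchMatrix_apply (n : ℕ) (i j : Fin n) :
    exchMatrix n i j = if j = i.rev then 1 else 0 := by
  have hi := i.isLt
  have hj := j.isLt
  simp only [exchMatrix, Matrix.of_apply]
  congr 1
  simp only [eq_iff_iff, Fin.ext_iff, Fin.val_rev]
  omega

lemma exch_mul (n : ℕ) (M : Matrix (Fin n) (Fin n) ℝ) (i j : Fin n) :
    (exchMatrix n * M) i j = M i.rev j := by
  rw [Matrix.mul_apply]
  rw [Finset.sum_eq_single i.rev]
  · rw [exchMatrix_apply]; simp
  · intro k _ hk
    rw [exchMatrix_apply, if_neg hk, zero_mul]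
  · simp

lemma mul_exch (n : ℕ) (M : Matrix (Fin n) (Fin n) ℝ) (i j : Fin n) :
    (M * exchMatrix n) i j = M i j.rev := by
  rw [Matrix.mul_apply]
  rw [Finset.sum_eq_single j.rev]
  · rw [exchMatrix_apply]; simp
  · intro k _ hk
    rw [exchMatrix_apply, if_neg fun h => hk (by rw [h, Fin.rev_rev]), mul_zero]
  · simp

lemma exch_mul_exch (n : ℕ) (M : Matrix (Fin n) (Fin n) ℝ) (i j : Fin n) :
    (exchMatrix n * M * exchMatrix n) i j = M i.rev j.rev := by
  rw [mul_exch, exch_mul]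

lemma exch_mul_self (n : ℕ) : exchMatrix n * exchMatrix n = 1 := by
  ext i j
  rw [exch_mul, exchMatrix_apply, Matrix.one_apply]
  simp [eq_comm]

/-- A symmetric solution of a linear matrix equation with
centrosymmetric data is centrosymmetric: let `A, B` be centrosymmetric with
`rank A ≥ n − 1`.  If `Z` is symmetric and `A Z = B`, then `J Z J = Z`. -/
theorem symm_solution_centrosymmetric (n : ℕ) (hn : 1 ≤ n)
    (A B Z : Matrix (Fin n) (Fin n) ℝ)
    (hA : exchMatrix n * A * exchMatrix n = A)
    (hB : exchMatrix n * B * exchMatrix n = B)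
    (hrank : n - 1 ≤ A.rank)
    (hZ : Z.IsSymm) (hAZ : A * Z = B) :
    exchMatrix n * Z * exchMatrix n = Z := by
  have hAW : A * (exchMatrix n * Z * exchMatrix n - Z) = 0 := by
    have h1 : A * (exchMatrix n * Z * exchMatrix n) = B := by
      conv_lhs => rw [← hA]
      simp only [Matrix.mul_assoc]
      rw [← Matrix.mul_assoc (exchMatrix n) (exchMatrix n) (Z * exchMatrix n),
        exch_mul_self, Matrix.one_mul, ← Matrix.mul_assoc A Z (exchMatrix n),
        hAZ, ← Matrix.mul_assoc (exchMatrix n) B (exchMatrix n), hB]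
    rw [Matrix.mul_sub, h1, hAZ, sub_self]
  set W : Matrix (Fin n) (Fin n) ℝ := exchMatrix n * Z * exchMatrix n - Z with hW
  -- W is symmetric
  have hZe : ∀ i j : Fin n, Z i j = Z j i := by
    intro i j
    conv_lhs => rw [← hZ]
    rfl
  have hWsymm : ∀ i j, W i j = W j i := by
    intro i j
    simp only [hW, Matrix.sub_apply, exch_mul_exch, hZe i j, hZe i.rev j.rev]
  -- W is anti-centrosymmetric : W (rev i) (rev j) = - W i j
  have hWanti : ∀ i j, W i.rev j.rev = - W i j := by
    intro i j
    simp only [hW, Matrix.sub_apply, exch_mul_exch, Fin.rev_rev]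
    ring
  -- kernel of A has dimension ≤ 1
  have hker : Module.finrank ℝ (LinearMap.ker A.mulVecLin) ≤ 1 := by
    have h1 := LinearMap.finrank_range_add_finrank_ker A.mulVecLin
    rw [Module.finrank_fintype_fun_eq_card, Fintype.card_fin] at h1
    have h2 : A.rank = Module.finrank ℝ (LinearMap.range A.mulVecLin) := rfl
    omega
  obtain ⟨v, hv⟩ := (Submodule.finrank_le_one_iff_isPrincipal _).mp hker
  -- columns of W lie in ker A
  have hcol : ∀ j : Fin n, ∃ c : ℝ, ∀ i, W i j = c * v i := by
    intro j
    have hmem : W.mulVec (Pi.single j 1) ∈ LinearMap.ker A.mulVecLin := by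
      rw [LinearMap.mem_ker, Matrix.mulVecLin_apply, Matrix.mulVec_mulVec, hAW,
        Matrix.zero_mulVec]
    rw [hv, Submodule.mem_span_singleton] at hmem
    obtain ⟨c, hc⟩ := hmem
    refine ⟨c, fun i => ?_⟩
    have h3 := congrFun hc i
    simp only [Pi.smul_apply, smul_eq_mul] at h3
    have h2 : W.mulVec (Pi.single j 1) i = W i j := by
      simp [Matrix.mulVec, dotProduct, Pi.single_apply]
    rw [← h2, ← h3]
  choose c hc using hcol
  -- key identity: (W i j)^2 = W i i * W j j
  have hsq : ∀ i j, W i j ^ 2 = W i i * W j j := by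
    intro i j
    have h1 : c j * v i = c i * v j := by
      rw [← hc j i, ← hc i j, hWsymm]
    calc W i j ^ 2 = (c j * v i) * (c j * v i) := by rw [hc]; ring
      _ = (c j * v i) * (c i * v j) := by rw [h1]
      _ = (c i * v i) * (c j * v j) := by ring
      _ = W i i * W j j := by rw [← hc, ← hc]
  -- diagonal vanishes
  have hdiag : ∀ i, W i i = 0 := by
    intro i
    have h1 : W i.rev i.rev = - W i i := hWanti i i
    have h2 := hsq i i.rev
    nlinarith [sq_nonneg (W i i.rev), sq_nonneg (W i i), hsq i.rev i.rev]
  -- hence W = 0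
  have hW0 : W = 0 := by
    ext i j
    have h2 := hsq i j
    rw [hdiag, hdiag, mul_zero] at h2
    have := pow_eq_zero_iff (n := 2) (by norm_num) |>.mp h2
    simpa using this
  exact sub_eq_zero.mp (hW ▸ hW0)
end
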